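/- arXiv:2006.13102 — 6 statements merged into one kernel-verified Lean document; each statement's English description precedes it below -/
import Mathlib

section
/- Let f ∈ 𝒮(S^m) be a symmetric m-tensor field on ℝⁿ with Schwartz components and let q ≥ 0 be an integer. Then for every (y,ξ) ∈ T𝕊^{n−1} the Fourier transform over T𝕊^{n−1} of the q-th integral moment transform satisfies \widehat{I^q f}(y,ξ) = (2π)^{1/2} i^q ⟨ξ,∂_y⟩^q ⟨f̂(y), ξ^m⟩, where ⟨f̂(y), ξ^m⟩ = f̂_{i₁…i_m}(y) ξ^{i₁}⋯ξ^{i_m} (componentwise Fourier transform of f) and ⟨ξ,∂_y⟩ = Σ_j ξ^j ∂/∂y^j. In particular \widehat{I^0 f}(y,ξ) = (2π)^{1/2} ⟨f̂(y), ξ^m⟩. -/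
noncomputable section

open MeasureTheory Filter
open scoped RealInnerProductSpace BigOperators

/-- `ℝⁿ` with the Euclidean structure. -/
abbrev En (n : ℕ) := EuclideanSpace ℝ (Fin n)

/-- A symmetric `m`-tensor on `ℝⁿ` (pointwise): a family of reals indexed by
`(i₁,…,i_m)`, invariant under permutations of the indices. -/
def IsSymTensor {n m : ℕ} (F : (Fin m → Fin n) → ℝ) : Prop :=
  ∀ (π : Equiv.Perm (Fin m)) (i : Fin m → Fin n), F (i ∘ π) = F i

/-- A symmetric `m`-tensor field on `ℝⁿ`. -/
def IsSymField {n m : ℕ} (f : (Fin m → Fin n) → En n → ℝ) : Prop :=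
  ∀ (π : Equiv.Perm (Fin m)) (i : Fin m → Fin n), f (i ∘ π) = f i

/-- All components of the field are Schwartz functions. -/
def IsSchwartzField {n m : ℕ} (f : (Fin m → Fin n) → En n → ℝ) : Prop :=
  ∀ i, ∃ φ : SchwartzMap (En n) ℝ, ⇑φ = f i

/-- Symmetrization `σ` of a tensor: average over all permutations of the indices. -/
def symz {n m : ℕ} {α : Type*} [AddCommMonoid α] [Module ℝ α]
    (F : (Fin m → Fin n) → α) : (Fin m → Fin n) → α :=
  fun i => ((m.factorial : ℝ))⁻¹ • ∑ π : Equiv.Perm (Fin m), F (i ∘ π)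

/-- The `q`-th momentum ray transform
`(J^q f)(x,ξ) = ∫ t^q f_{i₁…i_m}(x+tξ) ξ^{i₁}⋯ξ^{i_m} dt`, as a function on all of
`ℝⁿ × ℝⁿ`; its restriction to `TSⁿ⁻¹ = {|ξ|=1, ⟨x,ξ⟩=0}` is `I^q f`. -/
def momRT {n m : ℕ} (q : ℕ) (f : (Fin m → Fin n) → En n → ℝ) (x ξ : En n) : ℝ :=
  ∫ t : ℝ, t ^ q * ∑ i : Fin m → Fin n, f i (x + t • ξ) * ∏ r, ξ (i r)

/-- Coordinate partial derivative `∂/∂x^j`. -/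
def pd {n : ℕ} (j : Fin n) (u : En n → ℝ) : En n → ℝ :=
  fun x => fderiv ℝ u x (EuclideanSpace.single j 1)

/-- Inner differentiation (symmetrized derivative) `d`. -/
def dsym {n m : ℕ} (u : (Fin m → Fin n) → En n → ℝ) :
    (Fin (m + 1) → Fin n) → En n → ℝ :=
  symz (fun i => pd (i (Fin.last m)) (u (fun s => i s.castSucc)))

/-- Iterated inner differentiation `d^k`. -/
def dpow {n m : ℕ} : (k : ℕ) → ((Fin m → Fin n) → En n → ℝ) →
    (Fin (m + k) → Fin n) → En n → ℝ
  | 0, u => u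
  | k + 1, u => dsym (dpow k u)

/-- Divergence `δ`. -/
def divg {n m : ℕ} (u : (Fin (m + 1) → Fin n) → En n → ℝ) :
    (Fin m → Fin n) → En n → ℝ :=
  fun i x => ∑ j : Fin n, pd j (u (Fin.snoc i j)) x

/-- Iterated divergence `δ^k`. -/
def divpow {n : ℕ} : (k : ℕ) → {p : ℕ} → ((Fin (p + k) → Fin n) → En n → ℝ) →
    (Fin p → Fin n) → En n → ℝ
  | 0, _, u => u
  | k + 1, _, u => divpow k (divg u)

/-- Partial derivative `∂/∂x^j` in the first slot of a function of `(x, ξ)`. -/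
def pdx {n : ℕ} (j : Fin n) (F : En n → En n → ℝ) : En n → En n → ℝ :=
  fun x ξ => fderiv ℝ (fun x' => F x' ξ) x (EuclideanSpace.single j 1)

/-- Partial derivative `∂/∂ξ^j` in the second slot of a function of `(x, ξ)`. -/
def pdxi {n : ℕ} (j : Fin n) (F : En n → En n → ℝ) : En n → En n → ℝ :=
  fun x ξ => fderiv ℝ (fun ξ' => F x ξ') ξ (EuclideanSpace.single j 1)

/-- Iterated `∂x` derivatives along a list of indices. -/
def pdxList {n : ℕ} (l : List (Fin n)) (F : En n → En n → ℝ) : En n → En n → ℝ :=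
  l.foldr pdx F

/-- Iterated `∂ξ` derivatives along a list of indices. -/
def pdxiList {n : ℕ} (l : List (Fin n)) (F : En n → En n → ℝ) : En n → En n → ℝ :=
  l.foldr pdxi F

/-- The John operator `J_{ij} = ∂²/∂x^i∂ξ^j − ∂²/∂x^j∂ξ^i`. -/
def johnOp {n : ℕ} (i j : Fin n) (F : En n → En n → ℝ) : En n → En n → ℝ :=
  fun x ξ => pdx i (pdxi j F) x ξ - pdx j (pdxi i F) x ξ

/-- Iterated John operators `J_{i₁j₁} ⋯ J_{i_r j_r}`. -/
def johnIter {n : ℕ} (l : List (Fin n × Fin n)) (F : En n → En n → ℝ) : En n → En n → ℝ :=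
  l.foldr (fun ij G => johnOp ij.1 ij.2 G) F

/-- Sharafutdinov's Schwartz space `𝒮(TSⁿ⁻¹)`: a function on
`TSⁿ⁻¹ = {(x,ξ) : |ξ|=1, ⟨x,ξ⟩=0}` is Schwartz iff it is the restriction of a
Schwartz function on `ℝⁿ × ℝⁿ`. -/
def IsSchwartzOnTS {n : ℕ} (φ : En n → En n → ℝ) : Prop :=
  ∃ Φ : SchwartzMap (En n × En n) ℝ, ∀ x ξ : En n, ‖ξ‖ = 1 → ⟪x, ξ⟫ = 0 → φ x ξ = Φ (x, ξ)

/-- Symmetric multiplication `i_{x^{⊗k}} : S^m → S^{m+k}`. -/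
def iPowTens {n m k : ℕ} (x : En n) (V : (Fin m → Fin n) → ℝ) :
    (Fin (m + k) → Fin n) → ℝ :=
  symz (fun i => (∏ r : Fin k, x (i (Fin.natAdd m r))) * V (fun s => i (Fin.castAdd k s)))

/-- Convolution (contraction) `j_{x^{⊗k}} : S^{m+k} → S^m`. -/
def jPowTens {n m k : ℕ} (x : En n) (F : (Fin (m + k) → Fin n) → ℝ) :
    (Fin m → Fin n) → ℝ :=
  fun i => ∑ j : Fin k → Fin n, (∏ r, x (j r)) * F (Fin.append i j)

/-- Fourier transform over `TSⁿ⁻¹`: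
`φ̂(y,ξ) = (2π)^{−(n−1)/2} ∫_{ξ^⊥} e^{−i⟨x,y⟩} φ(x,ξ) dx`,
the integral being over the hyperplane `ξ^⊥` with its `(n−1)`-dimensional
Lebesgue measure. -/
def ftrTS {n : ℕ} (φ : En n → En n → ℝ) (y ξ : En n) : ℂ :=
  (((2 * Real.pi) ^ (-((n : ℝ) - 1) / 2) : ℝ) : ℂ) *
    ∫ x : (ℝ ∙ ξ)ᗮ, Complex.exp (-Complex.I * (⟪(x : En n), y⟫ : ℝ)) * (φ x ξ : ℂ)

/-- Componentwise Fourier transform with the convention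
`(2π)^{-n/2} ∫ e^{-i⟨x,y⟩} u(x) dx`. -/
def ftr {n : ℕ} (u : En n → ℝ) (y : En n) : ℂ :=
  (((2 * Real.pi) ^ (-(n : ℝ) / 2) : ℝ) : ℂ) *
    ∫ x : En n, Complex.exp (-Complex.I * (⟪x, y⟫ : ℝ)) * (u x : ℂ)

/-- Directional derivative `⟨ξ, ∂_y⟩` of a complex function. -/
def dirD {n : ℕ} (ξ : En n) (u : En n → ℂ) : En n → ℂ :=
  fun y => fderiv ℝ u y ξ

namespace MomRTAux
variable {n : ℕ}

def toComplexCLM : SchwartzMap (En n) ℝ →L[ℝ] SchwartzMap (En n) ℂ :=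
  SchwartzMap.bilinLeftCLM (ContinuousLinearMap.lsmul ℝ ℝ : ℝ →L[ℝ] ℂ →L[ℝ] ℂ)
    (Function.HasTemperateGrowth.const (1 : ℂ))

lemma toComplexCLM_apply (Φ : SchwartzMap (En n) ℝ) (z : En n) :
    toComplexCLM Φ z = (Φ z : ℂ) := by
  show (Φ z) • (1 : ℂ) = _
  simp [Complex.real_smul]

variable {n : ℕ}
def ker (y z : En n) : ℂ := Complex.exp (-Complex.I * (⟪z, y⟫ : ℝ))
lemma norm_ker (y z : En n) : ‖ker y z‖ = 1 := by
  rw [ker, Complex.norm_exp]; simp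
lemma continuous_ker (y : En n) : Continuous (fun z => ker y z) :=
  Complex.continuous_exp.comp (continuous_const.mul
    (Complex.continuous_ofReal.comp (continuous_id.inner continuous_const)))
lemma integrable_norm_mul (Ψ : SchwartzMap (En n) ℂ) :
    Integrable (fun z : En n => ‖z‖ * ‖Ψ z‖) := by
  simpa using Ψ.integrable_pow_mul volume 1
lemma integrable_ker_mul (Ψ : SchwartzMap (En n) ℂ) (y : En n) :
    Integrable (fun z => ker y z * Ψ z) := by
  refine Integrable.bdd_mul (c := 1) Ψ.integrable (continuous_ker y).aestronglyMeasurable (ae_of_all _ ?_)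
  intro z; rw [norm_ker]

-- pointwise derivative in y
lemma hasFDerivAt_ker_mul (Ψ : SchwartzMap (En n) ℂ) (z w : En n) :
    HasFDerivAt (fun y' => ker y' z * Ψ z)
      ((innerSL ℝ z).smulRight (ker w z * (-Complex.I * Ψ z))) w := by
  have hin : HasFDerivAt (fun y' : En n => (⟪z, y'⟫ : ℝ)) (innerSL ℝ z) w :=
    (innerSL ℝ z).hasFDerivAt
  have hg : HasDerivAt (fun s : ℝ => Complex.exp (-Complex.I * s) * Ψ z)
      (Complex.exp (-Complex.I * (⟪z, w⟫ : ℝ)) * (-Complex.I * 1) * Ψ z) ((⟪z, w⟫ : ℝ)) := by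
    have h1 : HasDerivAt (fun s : ℝ => ((s : ℝ) : ℂ)) 1 ((⟪z, w⟫ : ℝ)) := by
      simpa using (hasDerivAt_id (⟪z, w⟫ : ℝ)).ofReal_comp
    have h2 := ((h1.const_mul (-Complex.I)).cexp).mul_const (Ψ z)
    simpa using h2
  have hcomp := hg.hasFDerivAt.comp w hin
  refine HasFDerivAt.congr_fderiv (f := fun y' => ker y' z * Ψ z) hcomp ?_
  ext v
  simp only [ker, ContinuousLinearMap.smulRight_apply, ContinuousLinearMap.coe_comp',
    Function.comp_apply, ContinuousLinearMap.one_apply, innerSL_apply_apply, ContinuousLinearMap.toSpanSingleton_apply]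
  rw [Complex.real_smul, Complex.real_smul]
  ring

set_option maxHeartbeats 1000000 in
lemma aesm_deriv (Ψ : SchwartzMap (En n) ℂ) (w : En n) :
    AEStronglyMeasurable
      (fun z : En n => (innerSL ℝ z).smulRight (ker w z * (-Complex.I * Ψ z))) volume := by
  apply Continuous.aestronglyMeasurable
  have h1 : Continuous fun z : En n => (innerSL ℝ z) := (innerSL ℝ).continuous
  have h2 : Continuous fun z : En n => ker w z * (-Complex.I * Ψ z) :=
    (continuous_ker w).mul (continuous_const.mul Ψ.continuous)
  have h3 : Continuous fun p : (En n →L[ℝ] ℝ) × ℂ =>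
      ContinuousLinearMap.smulRightL ℝ (En n) ℂ p.1 p.2 :=
    (ContinuousLinearMap.smulRightL ℝ (En n) ℂ).continuous₂
  exact h3.comp (h1.prodMk h2)

lemma norm_deriv_le (Ψ : SchwartzMap (En n) ℂ) (w z : En n) :
    ‖(innerSL ℝ z).smulRight (ker w z * (-Complex.I * Ψ z))‖ ≤ ‖z‖ * ‖Ψ z‖ := by
  rw [ContinuousLinearMap.norm_smulRight_apply, innerSL_apply_norm]
  apply mul_le_mul_of_nonneg_left _ (norm_nonneg z)
  rw [norm_mul, norm_ker, one_mul, norm_mul]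
  simp

lemma integrable_deriv (Ψ : SchwartzMap (En n) ℂ) (w : En n) :
    Integrable (fun z : En n => (innerSL ℝ z).smulRight (ker w z * (-Complex.I * Ψ z))) := by
  refine Integrable.mono' (integrable_norm_mul Ψ) (aesm_deriv Ψ w) ?_
  exact ae_of_all _ (norm_deriv_le Ψ w)

lemma hasFDerivAt_G (Ψ : SchwartzMap (En n) ℂ) (y : En n) :
    HasFDerivAt (fun y' => ∫ z : En n, ker y' z * Ψ z)
      (∫ z : En n, (innerSL ℝ z).smulRight (ker y z * (-Complex.I * Ψ z))) y := by
  apply hasFDerivAt_integral_of_dominated_of_fderiv_le (s := Metric.ball y 1) (hs := Metric.ball_mem_nhds y one_pos)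
    (bound := fun z => ‖z‖ * ‖Ψ z‖)
    (F' := fun w z => (innerSL ℝ z).smulRight (ker w z * (-Complex.I * Ψ z)))
  · exact Eventually.of_forall fun w =>
      ((continuous_ker w).mul Ψ.continuous).aestronglyMeasurable
  · exact integrable_ker_mul Ψ y
  · exact aesm_deriv Ψ y
  · exact ae_of_all _ fun z w _ => norm_deriv_le Ψ w z
  · exact integrable_norm_mul Ψ
  · exact ae_of_all _ fun z w _ => hasFDerivAt_ker_mul Ψ z w

lemma dirD_G (Ψ : SchwartzMap (En n) ℂ) (ξ y : En n) :
    dirD ξ (fun y' => ∫ z : En n, ker y' z * Ψ z) y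
      = -Complex.I * ∫ z : En n, ker y z * (((⟪z, ξ⟫ : ℝ) : ℂ) * Ψ z) := by
  rw [dirD, (hasFDerivAt_G Ψ y).fderiv,
    ContinuousLinearMap.integral_apply (integrable_deriv Ψ y) ξ,
    ← smul_eq_mul, ← integral_smul]
  congr 1; funext z
  simp only [ContinuousLinearMap.smulRight_apply, innerSL_apply_apply, smul_eq_mul]
  rw [Complex.real_smul]
  ring

def innerMulCLM (ξ : En n) : SchwartzMap (En n) ℂ →L[ℝ] SchwartzMap (En n) ℂ :=
  SchwartzMap.bilinLeftCLM ((ContinuousLinearMap.lsmul ℝ ℝ : ℝ →L[ℝ] ℂ →L[ℝ] ℂ).flip)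
    ((innerSL ℝ ξ).hasTemperateGrowth)

lemma innerMulCLM_apply (ξ : En n) (Ψ : SchwartzMap (En n) ℂ) (z : En n) :
    innerMulCLM ξ Ψ z = ((⟪z, ξ⟫ : ℝ) : ℂ) * Ψ z := by
  show (⟪ξ, z⟫ : ℝ) • Ψ z = _
  rw [real_inner_comm, Complex.real_smul]

lemma innerMul_iter_apply (ξ : En n) (Ψ : SchwartzMap (En n) ℂ) (k : ℕ) (z : En n) :
    ((innerMulCLM ξ)^[k] Ψ) z = ((⟪z, ξ⟫ : ℝ) : ℂ) ^ k * Ψ z := by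
  induction k with
  | zero => simp
  | succ k ih =>
    rw [Function.iterate_succ_apply', innerMulCLM_apply, ih, pow_succ]
    ring

lemma iter_dirD (ξ : En n) :
    ∀ (k : ℕ) (c : ℂ) (Ψ : SchwartzMap (En n) ℂ),
      (dirD ξ)^[k] (fun y => c * ∫ z : En n, ker y z * Ψ z)
        = fun y => c * (-Complex.I) ^ k * ∫ z : En n, ker y z * (((⟪z, ξ⟫ : ℝ) : ℂ) ^ k * Ψ z) := by
  intro k
  induction k with
  | zero => intro c Ψ; simp
  | succ k ih =>
    intro c Ψ
    rw [Function.iterate_succ_apply]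
    have hstep : dirD ξ (fun y => c * ∫ z : En n, ker y z * Ψ z)
        = fun y => (c * -Complex.I) * ∫ z : En n, ker y z * (innerMulCLM ξ Ψ) z := by
      funext y
      have hd : DifferentiableAt ℝ (fun y' => ∫ z : En n, ker y' z * Ψ z) y :=
        (hasFDerivAt_G Ψ y).differentiableAt
      rw [dirD, fderiv_const_mul hd c, ContinuousLinearMap.smul_apply, smul_eq_mul]
      have := dirD_G Ψ ξ y
      rw [dirD] at this
      rw [this]
      rw [show (∫ z : En n, ker y z * ((innerMulCLM ξ Ψ) z))
            = ∫ z : En n, ker y z * (((⟪z, ξ⟫ : ℝ) : ℂ) * Ψ z) by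
          congr 1; funext z; rw [innerMulCLM_apply]]
      ring
    rw [hstep, ih (c * -Complex.I) (innerMulCLM ξ Ψ)]
    funext y
    rw [show (∫ z : En n, ker y z * (((⟪z, ξ⟫ : ℝ) : ℂ) ^ k * (innerMulCLM ξ Ψ) z))
          = ∫ z : En n, ker y z * (((⟪z, ξ⟫ : ℝ) : ℂ) ^ (k+1) * Ψ z) by
        congr 1; funext z; rw [innerMulCLM_apply, pow_succ]; ring]
    ring


variable {n : ℕ}

set_option maxHeartbeats 2000000 in
lemma integral_split (ξ : En n) (hξ : ‖ξ‖ = 1) (g : En n → ℂ) (hg : Integrable g) :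
    ∫ z : En n, g z = ∫ x : (ℝ ∙ ξ)ᗮ, ∫ t : ℝ, g ((x : En n) + t • ξ) := by
  obtain ⟨w, b, hb⟩ := exists_orthonormalBasis ℝ (ℝ ∙ ξ)ᗮ
  set v : ↥w ⊕ Unit → En n := Sum.elim (fun i => ((b i : (ℝ ∙ ξ)ᗮ) : En n)) (fun _ => ξ) with hv
  have hinner_bξ : ∀ i : ↥w, ⟪((b i : (ℝ ∙ ξ)ᗮ) : En n), ξ⟫ = 0 := by
    intro i
    have h := ((Submodule.mem_orthogonal (ℝ ∙ ξ) _).1 (b i).2) ξ (Submodule.mem_span_singleton_self ξ)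
    rw [real_inner_comm]; exact h
  have hon : Orthonormal ℝ v := by
    constructor
    · rintro (i | u)
      · exact b.orthonormal.1 i
      · exact hξ
    · rintro (i | u) (j | u') hne
      · have : i ≠ j := fun h => hne (by rw [h])
        exact b.orthonormal.2 this
      · exact hinner_bξ i
      · rw [real_inner_comm]; exact hinner_bξ j
      · exact absurd rfl hne
  have hsp : ⊤ ≤ Submodule.span ℝ (Set.range v) := by
    rw [hv, Set.Sum.elim_range, Submodule.span_union]
    have h1 : Submodule.span ℝ (Set.range fun i : ↥w => ((b i : (ℝ ∙ ξ)ᗮ) : En n)) = (ℝ ∙ ξ)ᗮ := by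
      have he : (Set.range fun i : ↥w => ((b i : (ℝ ∙ ξ)ᗮ) : En n))
          = (ℝ ∙ ξ)ᗮ.subtype '' Set.range ⇑b := by
        rw [← Set.range_comp]; rfl
      rw [he, Submodule.span_image]
      have hb2 : Submodule.span ℝ (Set.range ⇑b) = ⊤ := by
        rw [← b.coe_toBasis]; exact b.toBasis.span_eq
      rw [hb2, Submodule.map_top, Submodule.range_subtype]
    have h2 : Submodule.span ℝ (Set.range fun _ : Unit => ξ) = ℝ ∙ ξ := by
      rw [Set.range_const]
    rw [h1, h2, sup_comm]
    exact le_of_eq (Submodule.sup_orthogonal_of_hasOrthogonalProjection).symm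
  set B : OrthonormalBasis (↥w ⊕ Unit) ℝ (En n) := OrthonormalBasis.mk hon hsp with hB
  set Teq : ((ℝ ∙ ξ)ᗮ × ℝ) ≃ᵐ En n :=
    ((b.measurableEquiv.prodCongr (MeasurableEquiv.refl ℝ)).trans
      (((MeasurableEquiv.toLp 2 (↥w → ℝ)).symm).prodCongr (MeasurableEquiv.funUnique Unit ℝ).symm)).trans
      (((MeasurableEquiv.sumPiEquivProdPi (fun _ : ↥w ⊕ Unit => ℝ)).symm).trans
        (((MeasurableEquiv.toLp 2 (↥w ⊕ Unit → ℝ)).symm.symm).trans B.measurableEquiv.symm))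
    with hT
  have mp1 : MeasurePreserving
      (⇑(b.measurableEquiv.prodCongr (MeasurableEquiv.refl ℝ))) volume volume := by
    have h := (b.measurePreserving_measurableEquiv).prod (MeasurePreserving.id (volume : Measure ℝ))
    rw [← Measure.volume_eq_prod, ← Measure.volume_eq_prod] at h
    exact h
  have mp2 : MeasurePreserving
      (⇑(((MeasurableEquiv.toLp 2 (↥w → ℝ)).symm).prodCongr (MeasurableEquiv.funUnique Unit ℝ).symm))
      volume volume := by
    have h := (EuclideanSpace.volume_preserving_symm_measurableEquiv_toLp ↥w).prod
      ((volume_preserving_funUnique Unit ℝ).symm (MeasurableEquiv.funUnique Unit ℝ))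
    rw [← Measure.volume_eq_prod, ← Measure.volume_eq_prod] at h
    exact h
  have mp3 : MeasurePreserving
      (⇑(MeasurableEquiv.sumPiEquivProdPi (fun _ : ↥w ⊕ Unit => ℝ)).symm) volume volume := by
    have h := measurePreserving_sumPiEquivProdPi_symm (fun _ : ↥w ⊕ Unit => (volume : Measure ℝ))
    rw [← volume_pi, ← volume_pi, ← volume_pi, ← Measure.volume_eq_prod] at h
    exact h
  have mp4 : MeasurePreserving
      (⇑(MeasurableEquiv.toLp 2 (↥w ⊕ Unit → ℝ)).symm.symm) volume volume :=
    (EuclideanSpace.volume_preserving_symm_measurableEquiv_toLp (↥w ⊕ Unit)).symm _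
  have mp5 : MeasurePreserving (⇑B.measurableEquiv.symm) volume volume :=
    B.measurePreserving_measurableEquiv.symm _
  have hMP : MeasurePreserving (⇑Teq) volume volume := by
    rw [hT]
    simp only [MeasurableEquiv.coe_trans]
    exact ((((mp5.comp mp4).comp mp3).comp mp2).comp mp1)
  have hfun : ∀ (x : (ℝ ∙ ξ)ᗮ) (t : ℝ), Teq (x, t) = (x : En n) + t • ξ := by
    intro x t
    have h0 : Teq (x, t) = B.repr.symm
        (WithLp.toLp 2 (fun s : ↥w ⊕ Unit => Sum.elim (fun i => b.repr x i) (fun _ : Unit => t) s)) := rfl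
    rw [h0, ← OrthonormalBasis.sum_repr_symm, Fintype.sum_sum_type]
    simp only [WithLp.ofLp_toLp]
    have hleft : (∑ i : ↥w,
        (Sum.elim (fun i => b.repr x i) (fun _ : Unit => t) (Sum.inl i) : ℝ) • B (Sum.inl i))
        = (x : En n) := by
      have hBi : ∀ i : ↥w, B (Sum.inl i) = ((b i : (ℝ ∙ ξ)ᗮ) : En n) := fun i => by
        rw [hB, OrthonormalBasis.coe_mk, hv]; rfl
      simp only [Sum.elim_inl, hBi]
      have : ∀ i : ↥w, (b.repr x i : ℝ) • ((b i : (ℝ ∙ ξ)ᗮ) : En n)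
          = (((b.repr x i • b i : (ℝ ∙ ξ)ᗮ)) : En n) := fun i => rfl
      rw [Finset.sum_congr rfl (fun i _ => this i), ← AddSubmonoidClass.coe_finset_sum]
      rw [b.sum_repr x]
    have hright : (∑ u : Unit,
        (Sum.elim (fun i => b.repr x i) (fun _ : Unit => t) (Sum.inr u) : ℝ) • B (Sum.inr u))
        = t • ξ := by
      have hBu : B (Sum.inr ()) = ξ := by rw [hB, OrthonormalBasis.coe_mk, hv]; rfl
      simp [hBu]
    rw [hleft, hright]
  have hint : Integrable (g ∘ ⇑Teq) volume := by
    exact (hMP.integrable_comp_emb Teq.measurableEmbedding).2 hg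
  calc ∫ z : En n, g z = ∫ p : (ℝ ∙ ξ)ᗮ × ℝ, g (Teq p) :=
        (hMP.integral_comp Teq.measurableEmbedding g).symm
    _ = ∫ x : (ℝ ∙ ξ)ᗮ, ∫ t : ℝ, g (Teq (x, t)) := by
        rw [Measure.volume_eq_prod] at hint ⊢
        exact MeasureTheory.integral_prod _ hint
    _ = ∫ x : (ℝ ∙ ξ)ᗮ, ∫ t : ℝ, g ((x : En n) + t • ξ) := by
        congr 1; funext x; congr 1; funext t; rw [hfun]

end MomRTAux

set_option maxHeartbeats 2000000 in
/-- Fourier transform of the `q`-th momentum ray transform: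
`(I^q f)^(y,ξ) = (2π)^{1/2} i^q ⟨ξ,∂_y⟩^q ⟨f̂(y), ξ^m⟩` for `(y,ξ) ∈ TSⁿ⁻¹`. -/
theorem fourier_transform_of_momentum_ray_transform
    (n m q : ℕ)
    (f : (Fin m → Fin n) → En n → ℝ)
    (hf : IsSchwartzField f) (hfsym : IsSymField f) :
    ∀ y ξ : En n, ‖ξ‖ = 1 → ⟪y, ξ⟫ = 0 →
      ftrTS (momRT q f) y ξ
        = ((Real.sqrt (2 * Real.pi) : ℝ) : ℂ) * Complex.I ^ q *
          ((dirD ξ)^[q]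
            (fun y' => ∑ i : Fin m → Fin n, ftr (f i) y' * ∏ r, (ξ (i r) : ℂ)) y) := by
  intro y ξ hξ hyξ
  classical
  open MomRTAux in
  choose φ hφ using hf
  set Φ : SchwartzMap (En n) ℝ := ∑ i : Fin m → Fin n, (∏ r, ξ (i r)) • φ i with hΦ
  have hΦ_apply : ∀ z, Φ z = ∑ i : Fin m → Fin n, f i z * ∏ r, ξ (i r) := by
    intro z
    rw [hΦ]
    have hcoe : ⇑(∑ i : Fin m → Fin n, (∏ r, ξ (i r)) • φ i)
        = ∑ i : Fin m → Fin n, ⇑((∏ r, ξ (i r)) • φ i) := by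
      rw [← SchwartzMap.coe_coeHom, map_sum]
    rw [hcoe, Finset.sum_apply]
    congr 1; funext i
    rw [SchwartzMap.smul_apply, hφ i, smul_eq_mul, mul_comm]
  set Ψ0 : SchwartzMap (En n) ℂ := MomRTAux.toComplexCLM Φ with hΨ0
  have hΨ0_apply : ∀ z, Ψ0 z = (Φ z : ℂ) := fun z => MomRTAux.toComplexCLM_apply Φ z
  set cn : ℂ := (((2 * Real.pi) ^ (-(n : ℝ) / 2) : ℝ) : ℂ) with hcn
  -- rewrite the RHS inner function
  have hRHSfun : (fun y' => ∑ i : Fin m → Fin n, ftr (f i) y' * ∏ r, (ξ (i r) : ℂ))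
      = fun y' => cn * ∫ z : En n, MomRTAux.ker y' z * Ψ0 z := by
    funext y'
    calc ∑ i : Fin m → Fin n, ftr (f i) y' * ∏ r, (ξ (i r) : ℂ)
        = ∑ i : Fin m → Fin n, cn * ∫ z : En n,
            MomRTAux.ker y' z * (f i z : ℂ) * (((∏ r, ξ (i r) : ℝ)) : ℂ) := by
          refine Finset.sum_congr rfl fun i _ => ?_
          have hP : (∏ r, (ξ (i r) : ℂ)) = (((∏ r, ξ (i r) : ℝ)) : ℂ) := by push_cast; rfl
          rw [hP]
          conv_rhs => rw [MeasureTheory.integral_mul_const]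
          rw [ftr, mul_assoc]
          rfl
      _ = cn * ∑ i : Fin m → Fin n, ∫ z : En n,
            MomRTAux.ker y' z * (f i z : ℂ) * (((∏ r, ξ (i r) : ℝ)) : ℂ) := by
          rw [Finset.mul_sum]
      _ = cn * ∫ z : En n, ∑ i : Fin m → Fin n,
            MomRTAux.ker y' z * (f i z : ℂ) * (((∏ r, ξ (i r) : ℝ)) : ℂ) := by
          rw [MeasureTheory.integral_finset_sum]
          intro i _
          have heq : (fun z : En n => MomRTAux.ker y' z * (f i z : ℂ) * (((∏ r, ξ (i r) : ℝ)) : ℂ))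
              = fun z => (MomRTAux.ker y' z * ((MomRTAux.toComplexCLM (φ i)) z))
                  * (((∏ r, ξ (i r) : ℝ)) : ℂ) := by
            funext z; rw [MomRTAux.toComplexCLM_apply, hφ i]
          rw [heq]
          exact (MomRTAux.integrable_ker_mul _ y').mul_const _
      _ = cn * ∫ z : En n, MomRTAux.ker y' z * Ψ0 z := by
          congr 1
          congr 1; funext z
          rw [hΨ0_apply, hΦ_apply z]
          push_cast
          rw [Finset.mul_sum]
          refine Finset.sum_congr rfl fun i _ => by ring
  rw [hRHSfun, MomRTAux.iter_dirD ξ q cn Ψ0]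
  -- the integral S
  set S : ℂ := ∫ z : En n, MomRTAux.ker y z * (((⟪z, ξ⟫ : ℝ) : ℂ) ^ q * Ψ0 z) with hS
  -- integrability of the integrand
  have hg_int : Integrable (fun z : En n =>
      MomRTAux.ker y z * (((⟪z, ξ⟫ : ℝ) : ℂ) ^ q * Ψ0 z)) := by
    have hfeq : (fun z : En n => MomRTAux.ker y z * (((⟪z, ξ⟫ : ℝ) : ℂ) ^ q * Ψ0 z))
        = fun z => MomRTAux.ker y z * (((MomRTAux.innerMulCLM ξ)^[q] Ψ0) z) := by
      funext z; rw [MomRTAux.innerMul_iter_apply]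
    rw [hfeq]
    exact MomRTAux.integrable_ker_mul _ y
  have hsplit := MomRTAux.integral_split ξ hξ _ hg_int
  -- simplify the inner integral over the line
  have hx1 : ∀ (x : (ℝ ∙ ξ)ᗮ) (t : ℝ), (⟪(x : En n) + t • ξ, y⟫ : ℝ) = ⟪(x : En n), y⟫ := by
    intro x t
    rw [inner_add_left, real_inner_smul_left]
    have h0 : (⟪ξ, y⟫ : ℝ) = 0 := by rw [real_inner_comm]; exact hyξ
    rw [h0]; ring
  have hx2 : ∀ (x : (ℝ ∙ ξ)ᗮ) (t : ℝ), (⟪(x : En n) + t • ξ, ξ⟫ : ℝ) = t := by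
    intro x t
    rw [inner_add_left, real_inner_smul_left]
    have h0 : (⟪(x : En n), ξ⟫ : ℝ) = 0 := by
      have := ((Submodule.mem_orthogonal (ℝ ∙ ξ) _).1 x.2) ξ (Submodule.mem_span_singleton_self ξ)
      rw [real_inner_comm]; exact this
    have h1 : (⟪ξ, ξ⟫ : ℝ) = 1 := by
      rw [real_inner_self_eq_norm_mul_norm, hξ]; norm_num
    rw [h0, h1]; ring
  have hpt : ∀ x : (ℝ ∙ ξ)ᗮ,
      (∫ t : ℝ, MomRTAux.ker y ((x : En n) + t • ξ)
        * (((⟪(x : En n) + t • ξ, ξ⟫ : ℝ) : ℂ) ^ q * Ψ0 ((x : En n) + t • ξ)))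
      = MomRTAux.ker y (x : En n) * ((momRT q f (x : En n) ξ : ℝ) : ℂ) := by
    intro x
    have e1 : ∀ t : ℝ, MomRTAux.ker y ((x : En n) + t • ξ)
        * (((⟪(x : En n) + t • ξ, ξ⟫ : ℝ) : ℂ) ^ q * Ψ0 ((x : En n) + t • ξ))
        = MomRTAux.ker y (x : En n)
          * (((t ^ q * Φ ((x : En n) + t • ξ) : ℝ)) : ℂ) := by
      intro t
      rw [MomRTAux.ker, MomRTAux.ker, hx1, hx2, hΨ0_apply]
      push_cast
      ring
    rw [show (∫ t : ℝ, MomRTAux.ker y ((x : En n) + t • ξ)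
        * (((⟪(x : En n) + t • ξ, ξ⟫ : ℝ) : ℂ) ^ q * Ψ0 ((x : En n) + t • ξ)))
        = ∫ t : ℝ, MomRTAux.ker y (x : En n)
            * (((t ^ q * Φ ((x : En n) + t • ξ) : ℝ)) : ℂ) by
      congr 1; funext t; rw [e1]]
    have e2 : (∫ t : ℝ, MomRTAux.ker y (x : En n)
        * (((t ^ q * Φ ((x : En n) + t • ξ) : ℝ)) : ℂ))
        = MomRTAux.ker y (x : En n)
          * (((∫ t : ℝ, t ^ q * Φ ((x : En n) + t • ξ)) : ℝ) : ℂ) := by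
      rw [show (∫ t : ℝ, MomRTAux.ker y (x : En n)
          * (((t ^ q * Φ ((x : En n) + t • ξ) : ℝ)) : ℂ))
          = ∫ t : ℝ, MomRTAux.ker y (x : En n)
            • (((t ^ q * Φ ((x : En n) + t • ξ) : ℝ)) : ℂ) from rfl]
      rw [MeasureTheory.integral_smul, smul_eq_mul]
      congr 1
      exact integral_ofReal
    rw [e2]
    congr 2
    rw [momRT]
    congr 1; funext t
    rw [hΦ_apply]
  -- identify the LHS with the split integral
  have hLHS : ftrTS (momRT q f) y ξ
      = (((2 * Real.pi) ^ (-((n : ℝ) - 1) / 2) : ℝ) : ℂ) * S := by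
    rw [ftrTS, hS, hsplit]
    congr 1
    rw [show (∫ x : (ℝ ∙ ξ)ᗮ, ∫ t : ℝ, MomRTAux.ker y ((x : En n) + t • ξ)
        * (((⟪(x : En n) + t • ξ, ξ⟫ : ℝ) : ℂ) ^ q * Ψ0 ((x : En n) + t • ξ)))
        = ∫ x : (ℝ ∙ ξ)ᗮ, MomRTAux.ker y (x : En n) * ((momRT q f (x : En n) ξ : ℝ) : ℂ) by
      congr 1; funext x; rw [hpt x]]
    rfl
  rw [hLHS]
  -- final constant bookkeeping
  have hI : Complex.I ^ q * (-Complex.I) ^ q = 1 := by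
    rw [← mul_pow, mul_neg, Complex.I_mul_I, neg_neg, one_pow]
  have hc : ((2 * Real.pi) ^ (-((n : ℝ) - 1) / 2) : ℝ)
      = Real.sqrt (2 * Real.pi) * ((2 * Real.pi) ^ (-(n : ℝ) / 2) : ℝ) := by
    rw [Real.sqrt_eq_rpow, ← Real.rpow_add (by positivity)]
    congr 1; ring
  rw [hc, Complex.ofReal_mul, ← hcn]
  rw [show ((Real.sqrt (2 * Real.pi) : ℝ) : ℂ) * Complex.I ^ q * (cn * (-Complex.I) ^ q * S)
      = ((Real.sqrt (2 * Real.pi) : ℝ) : ℂ) * cn * (Complex.I ^ q * (-Complex.I) ^ q * S) from by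
    ring]
  rw [hI, one_mul]
end
end

section
/- Let f ∈ 𝒮(S^m) be a symmetric m-tensor field on ℝⁿ with Schwartz components and let 0 ≤ q ≤ m. Then for all (x,ξ) ∈ ℝⁿ×(ℝⁿ∖{0}): (J^q f)(x,ξ) = |ξ|^{m−2q−1} Σ_{ℓ=0}^q (−1)^{q−ℓ} C(q,ℓ) |ξ|^ℓ ⟨ξ,x⟩^{q−ℓ} (I^ℓ f)(x − (⟨x,ξ⟩/|ξ|²)ξ, ξ/|ξ|). In particular the data (I^0 f,…,I^k f) and (J^0 f,…,J^k f) determine each other. -/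
noncomputable section

open MeasureTheory Filter
open scoped RealInnerProductSpace BigOperators

lemma htg_affine {n : ℕ} (x η : En n) :
    Function.HasTemperateGrowth (fun t : ℝ => x + t • η) := by
  let L : ℝ →L[ℝ] En n := (ContinuousLinearMap.id ℝ ℝ).smulRight η
  have hg : (fun t : ℝ => x + t • η) = fun t => x + L t := rfl
  rw [hg]
  apply Function.HasTemperateGrowth.of_fderiv (k := 1) (C := ‖x‖ + ‖L‖)
  · have : (fderiv ℝ fun t : ℝ => x + L t) = fun _ => L := by
      ext1 t
      rw [fderiv_const_add, L.fderiv]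
    rw [this]
    exact .const _
  · exact (differentiable_const x).add L.differentiable
  · intro t
    calc ‖x + L t‖ ≤ ‖x‖ + ‖L t‖ := norm_add_le _ _
    _ ≤ ‖x‖ + ‖L‖ * ‖t‖ := by gcongr; exact L.le_opNorm t
    _ ≤ (‖x‖ + ‖L‖) * (1 + ‖t‖) ^ 1 := by
        have h1 : (0:ℝ) ≤ ‖x‖ := norm_nonneg _
        have h2 : (0:ℝ) ≤ ‖L‖ := norm_nonneg _
        have h3 : (0:ℝ) ≤ ‖t‖ := norm_nonneg _
        nlinarith

lemma antilip_affine {n : ℕ} (x η : En n) (hη : η ≠ 0) :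
    AntilipschitzWith (‖η‖₊⁻¹) (fun t : ℝ => x + t • η) := by
  apply AntilipschitzWith.of_le_mul_dist
  intro a b
  have hn : (0:ℝ) < ‖η‖ := norm_pos_iff.mpr hη
  have : dist (x + a • η) (x + b • η) = dist a b * ‖η‖ := by
    rw [dist_eq_norm, dist_eq_norm]
    simp only [add_sub_add_left_eq_sub, ← sub_smul, norm_smul, Real.norm_eq_abs]
  rw [this, NNReal.coe_inv, coe_nnnorm]
  field_simp
  exact le_rfl

lemma integrable_pow_mul_line {n : ℕ} (φ : SchwartzMap (En n) ℝ) (x η : En n)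
    (hη : η ≠ 0) (ℓ : ℕ) :
    Integrable (fun t : ℝ => t ^ ℓ * φ (x + t • η)) := by
  let ψ : SchwartzMap ℝ ℝ :=
    SchwartzMap.compCLMOfAntilipschitz ℝ (htg_affine x η) (antilip_affine x η hη) φ
  have hψ : ∀ t : ℝ, ψ t = φ (x + t • η) := fun t => rfl
  have h1 : Integrable (fun t : ℝ => ‖t‖ ^ ℓ * ‖ψ t‖) := ψ.integrable_pow_mul volume ℓ
  have h2 : Integrable (fun t : ℝ => t ^ ℓ * ψ t) := by
    refine h1.mono' (((continuous_pow ℓ).mul ψ.continuous).aestronglyMeasurable) ?_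
    filter_upwards with t
    rw [norm_mul, norm_pow]
  exact h2.congr (Filter.Eventually.of_forall fun t => by dsimp only; rw [hψ])

/-- the relation between the extended transform `J^q` and the
restricted transforms `I^ℓ` (values of `momRT` at points of `TSⁿ⁻¹`):
`(J^q f)(x,ξ) = |ξ|^{m−2q−1} Σ_{ℓ=0}^q (−1)^{q−ℓ} C(q,ℓ) |ξ|^ℓ ⟨ξ,x⟩^{q−ℓ}
(I^ℓ f)(x − (⟨x,ξ⟩/|ξ|²)ξ, ξ/|ξ|)`.  (The point
`(x − (⟨x,ξ⟩/|ξ|²)ξ, ξ/|ξ|)` lies on `TSⁿ⁻¹`, so the right-hand side uses only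
the data `I^0 f, …, I^q f`; hence `(I^ℓ f)_{ℓ≤k}` and `(J^ℓ f)_{ℓ≤k}` are
equivalent data.) -/
theorem momRT_extension_formula
    (n m q : ℕ) (hq : q ≤ m)
    (f : (Fin m → Fin n) → En n → ℝ)
    (hf : IsSchwartzField f) (hfsym : IsSymField f) :
    ∀ x ξ : En n, ξ ≠ 0 →
      momRT q f x ξ
        = ‖ξ‖ ^ ((m : ℤ) - 2 * q - 1) *
          ∑ ℓ ∈ Finset.range (q + 1),
            (-1 : ℝ) ^ (q - ℓ) * (q.choose ℓ) * ‖ξ‖ ^ ℓ * (⟪ξ, x⟫ : ℝ) ^ (q - ℓ) *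
              momRT ℓ f (x - ((⟪x, ξ⟫ : ℝ) / ‖ξ‖ ^ 2) • ξ) (‖ξ‖⁻¹ • ξ) := by
  intro x ξ hξ
  classical
  have hs0 : (0:ℝ) < ‖ξ‖ := norm_pos_iff.mpr hξ
  rw [real_inner_comm x ξ]
  set s : ℝ := ‖ξ‖ with hsdef
  have hsne : s ≠ 0 := ne_of_gt hs0
  set p : ℝ := ⟪x, ξ⟫ with hpdef
  set η : En n := s⁻¹ • ξ with hηdef
  set c : ℝ := p / s with hcdef
  set x' : En n := x - (p / s ^ 2) • ξ with hx'def
  have hηne : η ≠ 0 := smul_ne_zero (inv_ne_zero hsne) hξ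
  -- pointwise identity for the base points
  have hpoint : ∀ t : ℝ, x + t • ξ = x' + (s * t + c) • η := by
    intro t
    rw [hx'def, hηdef, hcdef]
    match_scalars
    · ring
    · field_simp
      ring
  -- product identity
  have hprod : ∀ i : Fin m → Fin n, (∏ r, ξ (i r)) = s ^ m * ∏ r, η (i r) := by
    intro i
    have h1 : ∀ r : Fin m, η (i r) = s⁻¹ * ξ (i r) := by
      intro r
      rw [hηdef]
      simp
    simp_rw [h1]
    rw [Finset.prod_mul_distrib, Finset.prod_const, Finset.card_univ, Fintype.card_fin,
      ← mul_assoc, ← mul_pow]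
    field_simp
    simp
  -- integrability
  have hInt : ∀ ℓ : ℕ,
      Integrable (fun u : ℝ => u ^ ℓ * ∑ i : Fin m → Fin n, f i (x' + u • η) * ∏ r, η (i r)) := by
    intro ℓ
    have heq : (fun u : ℝ => u ^ ℓ * ∑ i : Fin m → Fin n, f i (x' + u • η) * ∏ r, η (i r))
        = fun u : ℝ => ∑ i : Fin m → Fin n, (u ^ ℓ * f i (x' + u • η)) * ∏ r, η (i r) := by
      funext u
      rw [Finset.mul_sum]
      refine Finset.sum_congr rfl fun i _ => by ring
    rw [heq]
    apply integrable_finset_sum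
    intro i _
    obtain ⟨φ, hφ⟩ := hf i
    have h2 := (integrable_pow_mul_line φ x' η hηne ℓ).mul_const (∏ r, η (i r))
    rw [hφ] at h2
    exact h2
  -- the substituted function
  set H : ℝ → ℝ := fun u =>
    (s⁻¹ * (u - c)) ^ q * (s ^ m * ∑ i : Fin m → Fin n, f i (x' + u • η) * ∏ r, η (i r))
    with hHdef
  -- step 1 : momRT q f x ξ = ∫ t, H (s * t + c)
  have step1 : momRT q f x ξ = ∫ t : ℝ, H (s * t + c) := by
    unfold momRT
    congr 1
    funext t
    rw [hHdef]
    dsimp only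
    have h1 : s⁻¹ * (s * t + c - c) = t := by field_simp; ring
    rw [← hpoint t, h1]
    congr 1
    rw [Finset.mul_sum]
    refine Finset.sum_congr rfl fun i _ => ?_
    rw [hprod i]
    ring
  -- step 2 : change of variables
  have step2 : (∫ t : ℝ, H (s * t + c)) = s⁻¹ * ∫ u : ℝ, H u := by
    have h1 : (∫ t : ℝ, H (s * t + c)) = ∫ t : ℝ, (fun u => H (u + c)) (s * t) := rfl
    rw [h1, MeasureTheory.Measure.integral_comp_mul_left (fun u => H (u + c)) s,
      MeasureTheory.integral_add_right_eq_self, smul_eq_mul,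
      abs_of_pos (inv_pos.mpr hs0)]
  -- step 3 : binomial expansion and swapping sum and integral
  have hHexp : H = fun u => ∑ ℓ ∈ Finset.range (q + 1),
      ((q.choose ℓ : ℝ) * (-c) ^ (q - ℓ) * (s⁻¹) ^ q * s ^ m) *
        (u ^ ℓ * ∑ i : Fin m → Fin n, f i (x' + u • η) * ∏ r, η (i r)) := by
    funext u
    rw [hHdef]
    dsimp only
    have h1 : (s⁻¹ * (u - c)) ^ q
        = ∑ ℓ ∈ Finset.range (q + 1),
            (s⁻¹) ^ q * (u ^ ℓ * (-c) ^ (q - ℓ) * (q.choose ℓ : ℝ)) := by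
      rw [mul_pow, sub_eq_add_neg, add_pow, Finset.mul_sum]
    rw [h1, Finset.sum_mul]
    refine Finset.sum_congr rfl fun ℓ _ => by ring
  have step3 : (∫ u : ℝ, H u) = ∑ ℓ ∈ Finset.range (q + 1),
      ((q.choose ℓ : ℝ) * (-c) ^ (q - ℓ) * (s⁻¹) ^ q * s ^ m) * momRT ℓ f x' η := by
    rw [hHexp, MeasureTheory.integral_finset_sum _ (fun ℓ _ => (hInt ℓ).const_mul _)]
    refine Finset.sum_congr rfl fun ℓ _ => ?_
    rw [MeasureTheory.integral_const_mul]
    rfl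
  rw [step1, step2, step3, Finset.mul_sum, Finset.mul_sum]
  refine Finset.sum_congr rfl fun ℓ hℓ => ?_
  have hℓq : ℓ ≤ q := Finset.mem_range_succ_iff.mp hℓ
  have hz : (s : ℝ) ^ ((m : ℤ) - 2 * q - 1) = s ^ m / s ^ (2 * q + 1) := by
    rw [show (m : ℤ) - 2 * q - 1 = (m : ℤ) - ((2 * q + 1 : ℕ) : ℤ) by push_cast; ring,
      zpow_sub₀ hsne, zpow_natCast, zpow_natCast]
  rw [hz]
  obtain ⟨k, rfl⟩ : ∃ k, q = k + ℓ := ⟨q - ℓ, (Nat.sub_add_cancel hℓq).symm⟩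
  simp only [Nat.add_sub_cancel]
  have hco : s⁻¹ * ((((k + ℓ).choose ℓ : ℝ)) * (-c) ^ k * (s⁻¹) ^ (k + ℓ) * s ^ m)
      = s ^ m / s ^ (2 * (k + ℓ) + 1) * ((-1 : ℝ) ^ k * (((k + ℓ).choose ℓ : ℝ)) * s ^ ℓ * p ^ k) := by
    rw [hcdef, neg_pow, div_pow, inv_pow]
    field_simp
    ring
  linear_combination momRT ℓ f x' η * hco
end
end

section
/- Let g ∈ 𝒮(S^{m−s}) be a symmetric (m−s)-tensor field on ℝⁿ with Schwartz components, where 0 ≤ s ≤ m. Then for every integer ℓ ≥ 0 the momentum ray transforms of the m-tensor field d^s g satisfy: I^ℓ(d^s g) = (−1)^s C(ℓ,s) s! I^{ℓ−s} g if s ≤ ℓ, and I^ℓ(d^s g) = 0 if s > ℓ. In particular I^ℓ(d u) = −ℓ I^{ℓ−1} u and I^0(d u) = 0 for u ∈ 𝒮(S^{m−1}). -/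
noncomputable section

open MeasureTheory Filter
open scoped RealInnerProductSpace BigOperators

section Aux

variable {n : ℕ}

lemma line_hasTemperateGrowth (x ξ : En n) :
    Function.HasTemperateGrowth (fun t : ℝ => x + t • ξ) := by
  set L : ℝ →L[ℝ] En n := ContinuousLinearMap.smulRight (1 : ℝ →L[ℝ] ℝ) ξ with hL
  have hLcoe : ⇑L = fun t : ℝ => t • ξ := by
    funext t; simp [hL]
  have hfd : ∀ t : ℝ, HasFDerivAt (fun s : ℝ => x + s • ξ) L t := by
    intro t
    have h := (L.hasFDerivAt (x := t)).const_add x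
    rw [hLcoe] at h
    exact h
  refine Function.HasTemperateGrowth.of_fderiv ?_ (fun t => (hfd t).differentiableAt)
    (k := 1) (C := ‖x‖ + ‖ξ‖) (fun t => ?_)
  · have : fderiv ℝ (fun s : ℝ => x + s • ξ) = fun _ => L := by
      funext t; exact (hfd t).fderiv
    rw [this]
    exact .const _
  · have h1 : ‖x + t • ξ‖ ≤ ‖x‖ + ‖t‖ * ‖ξ‖ := by
      simpa [norm_smul] using norm_add_le x (t • ξ)
    have := norm_nonneg x; have := norm_nonneg ξ; have := norm_nonneg t
    nlinarith

lemma schwartz_comp_line (φ : SchwartzMap (En n) ℝ) (x ξ : En n) (hξ : ‖ξ‖ = 1) :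
    ∃ ψ : SchwartzMap ℝ ℝ, ⇑ψ = fun t => φ (x + t • ξ) := by
  have hup : ∃ (k : ℕ) (C : ℝ), ∀ t : ℝ, ‖t‖ ≤ C * (1 + ‖x + t • ξ‖) ^ k := by
    refine ⟨1, 1 + ‖x‖, fun t => ?_⟩
    have h1 : ‖t • ξ‖ = ‖t‖ := by rw [norm_smul, hξ, mul_one]
    have h2 : ‖t • ξ‖ ≤ ‖x + t • ξ‖ + ‖x‖ := by
      have h := norm_sub_le (x + t • ξ) x
      simpa using h
    have := norm_nonneg x; have := norm_nonneg (x + t • ξ)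
    nlinarith [h1 ▸ h2]
  exact ⟨SchwartzMap.compCLM ℝ (line_hasTemperateGrowth x ξ) hup φ, rfl⟩

lemma hasDerivAt_line (x ξ : En n) (t : ℝ) :
    HasDerivAt (fun s : ℝ => x + s • ξ) ξ t := by
  simpa using ((hasDerivAt_id t).smul_const ξ).const_add x

lemma schwartz_line_hasDerivAt (φ : SchwartzMap (En n) ℝ) (x ξ : En n) (t : ℝ) :
    HasDerivAt (fun s : ℝ => φ (x + s • ξ)) (fderiv ℝ φ (x + t • ξ) ξ) t :=
  (φ.differentiableAt.hasFDerivAt).comp_hasDerivAt t (hasDerivAt_line x ξ t)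

lemma fderiv_apply_eq_sum (φ : SchwartzMap (En n) ℝ) (y ξ : En n) :
    fderiv ℝ φ y ξ = ∑ a : Fin n, fderiv ℝ φ y (EuclideanSpace.single a 1) * ξ a := by
  have hξ : ξ = ∑ a : Fin n, ξ a • EuclideanSpace.single a (1:ℝ) := by
    have h := (EuclideanSpace.basisFun (Fin n) ℝ).sum_repr ξ
    simp only [EuclideanSpace.basisFun_apply, EuclideanSpace.basisFun_repr] at h
    exact h.symm
  conv_lhs => rw [hξ]
  rw [map_sum]
  exact Finset.sum_congr rfl fun a _ => by rw [(fderiv ℝ (⇑φ) y).map_smul]; simp [mul_comm]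

end Aux

section Aux2

lemma symz_contract {n M : ℕ} (H : (Fin M → Fin n) → ℝ) (ξ : En n) :
    ∑ i : Fin M → Fin n, symz H i * ∏ r, ξ (i r)
      = ∑ i : Fin M → Fin n, H i * ∏ r, ξ (i r) := by
  have key : ∀ π : Equiv.Perm (Fin M),
      (∑ i : Fin M → Fin n, H (i ∘ π) * ∏ r, ξ (i r))
        = ∑ i : Fin M → Fin n, H i * ∏ r, ξ (i r) := by
    intro π
    refine Fintype.sum_bijective (fun i => i ∘ π)
      ((Equiv.arrowCongr π.symm (Equiv.refl (Fin n))).bijective) _ _ (fun i => ?_)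
    congr 1
    exact (Equiv.prod_comp π (fun r => ξ (i r))).symm
  unfold symz
  have h1 : ∀ i : Fin M → Fin n,
      (((M.factorial : ℝ))⁻¹ • ∑ π : Equiv.Perm (Fin M), H (i ∘ π)) * ∏ r, ξ (i r)
        = ((M.factorial : ℝ))⁻¹ * ∑ π : Equiv.Perm (Fin M), H (i ∘ π) * ∏ r, ξ (i r) := by
    intro i; rw [smul_eq_mul, mul_assoc, Finset.sum_mul]
  rw [Finset.sum_congr rfl fun i _ => h1 i, ← Finset.mul_sum, Finset.sum_comm]
  rw [Finset.sum_congr rfl fun π _ => key π, Finset.sum_const]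
  simp only [Finset.card_univ, Fintype.card_perm, Fintype.card_fin, nsmul_eq_mul]
  rw [← mul_assoc, inv_mul_cancel₀ (by exact_mod_cast M.factorial_ne_zero), one_mul]

lemma sum_snoc_decomp {n m : ℕ} (G : (Fin (m + 1) → Fin n) → ℝ) :
    ∑ i : Fin (m + 1) → Fin n, G i
      = ∑ i : Fin m → Fin n, ∑ a : Fin n, G (Fin.snoc i a) := by
  rw [← (Fin.snocEquiv (fun _ => Fin n)).sum_comp G, Fintype.sum_prod_type, Finset.sum_comm]
  refine Finset.sum_congr rfl fun i _ => Finset.sum_congr rfl fun a _ => ?_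
  congr 1

lemma isSchwartzField_dsym {n m : ℕ} {u : (Fin m → Fin n) → En n → ℝ}
    (hu : IsSchwartzField u) : IsSchwartzField (dsym u) := by
  choose φ hφ using hu
  intro i
  refine ⟨(((m + 1).factorial : ℝ))⁻¹ • ∑ π : Equiv.Perm (Fin (m + 1)),
      LineDeriv.lineDerivOp (EuclideanSpace.single ((i ∘ π) (Fin.last m)) (1 : ℝ))
        (φ (fun s => (i ∘ π) s.castSucc)), ?_⟩
  funext y
  have hsum : ∀ (fs : Equiv.Perm (Fin (m+1)) → SchwartzMap (En n) ℝ),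
      (∑ π : Equiv.Perm (Fin (m+1)), fs π) y = ∑ π : Equiv.Perm (Fin (m+1)), fs π y := by
    intro fs
    rw [← SchwartzMap.coe_coeHom, map_sum]
    simp [SchwartzMap.coe_coeHom, Finset.sum_apply]
  rw [SchwartzMap.smul_apply, hsum]
  simp only [SchwartzMap.lineDerivOp_apply_eq_fderiv]
  unfold dsym symz pd
  rw [Pi.smul_apply, Finset.sum_apply]
  congr 1
  refine Finset.sum_congr rfl fun π _ => ?_
  rw [hφ]

lemma isSchwartzField_dpow {n p : ℕ} (s : ℕ) {g : (Fin p → Fin n) → En n → ℝ}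
    (hg : IsSchwartzField g) : IsSchwartzField (dpow s g) := by
  induction s with
  | zero => exact hg
  | succ s ih => exact isSchwartzField_dsym ih

end Aux2

section Aux3

lemma integrable_pow_mul_schwartz (q : ℕ) (Θ : SchwartzMap ℝ ℝ) :
    Integrable (fun t : ℝ => t ^ q * Θ t) := by
  have h := Θ.integrable_pow_mul (μ := volume) q
  refine h.mono ((continuous_pow q |>.mul Θ.continuous).aestronglyMeasurable)
    (Filter.Eventually.of_forall fun t => le_of_eq ?_)
  simp [abs_mul, abs_pow]

lemma momRT_dsym {n m : ℕ} (ℓ : ℕ) (u : (Fin m → Fin n) → En n → ℝ)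
    (hu : IsSchwartzField u) (x ξ : En n) (hξ : ‖ξ‖ = 1) :
    momRT ℓ (dsym u) x ξ = -(ℓ : ℝ) * momRT (ℓ - 1) u x ξ := by
  choose φ hφ using hu
  choose ψ hψ using fun i => schwartz_comp_line (φ i) x ξ hξ
  set Ψ : SchwartzMap ℝ ℝ := ∑ i : Fin m → Fin n, (∏ r, ξ (i r)) • ψ i with hΨdef
  have hΨcoe : ⇑Ψ = fun t => ∑ i : Fin m → Fin n, (∏ r, ξ (i r)) * φ i (x + t • ξ) := by
    funext t
    rw [hΨdef, ← SchwartzMap.coe_coeHom, map_sum]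
    simp only [SchwartzMap.coe_coeHom, Finset.sum_apply]
    refine Finset.sum_congr rfl fun i _ => ?_
    rw [SchwartzMap.smul_apply, hψ i]
    simp
  have hΨ : ∀ t : ℝ, Ψ t = ∑ i : Fin m → Fin n, u i (x + t • ξ) * ∏ r, ξ (i r) := by
    intro t
    rw [hΨcoe]
    exact Finset.sum_congr rfl fun i _ => by rw [← hφ i, mul_comm]
  have hΨd : ∀ t : ℝ,
      HasDerivAt Ψ (∑ i : Fin m → Fin n, fderiv ℝ (φ i) (x + t • ξ) ξ * ∏ r, ξ (i r)) t := by
    intro t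
    rw [hΨcoe]
    have := HasDerivAt.fun_sum (fun i (_ : i ∈ Finset.univ) =>
      ((schwartz_line_hasDerivAt (φ i) x ξ t).const_mul (∏ r, ξ (i r))))
    refine this.congr_deriv ?_
    exact Finset.sum_congr rfl fun i _ => mul_comm _ _
  -- the pointwise integrand identity
  have hkey : ∀ t : ℝ,
      (∑ i : Fin (m + 1) → Fin n, dsym u i (x + t • ξ) * ∏ r, ξ (i r)) = deriv Ψ t := by
    intro t
    set y := x + t • ξ with hy
    have hpt : ∀ i : Fin (m + 1) → Fin n,
        dsym u i y = symz (fun j : Fin (m + 1) → Fin n =>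
          pd (j (Fin.last m)) (u fun s => j s.castSucc) y) i := by
      intro i
      unfold dsym symz
      rw [Pi.smul_apply, Finset.sum_apply]
    rw [Finset.sum_congr rfl fun i _ => by rw [hpt i]]
    rw [symz_contract (fun j : Fin (m + 1) → Fin n =>
      pd (j (Fin.last m)) (u fun s => j s.castSucc) y) ξ]
    rw [sum_snoc_decomp (fun j : Fin (m + 1) → Fin n =>
      pd (j (Fin.last m)) (u fun s => j s.castSucc) y * ∏ r, ξ (j r))]
    rw [(hΨd t).deriv]
    refine Finset.sum_congr rfl fun i _ => ?_
    have hsimp : ∀ a : Fin n,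
        pd ((Fin.snoc i a : Fin (m+1) → Fin n) (Fin.last m))
          (u fun s => (Fin.snoc i a : Fin (m+1) → Fin n) s.castSucc) y
            * ∏ r : Fin (m+1), ξ ((Fin.snoc i a : Fin (m+1) → Fin n) r)
        = fderiv ℝ (φ i) y (EuclideanSpace.single a 1) * ξ a * ∏ r : Fin m, ξ (i r) := by
      intro a
      have h1 : (fun s : Fin m => (Fin.snoc i a : Fin (m+1) → Fin n) s.castSucc) = i := by
        funext s; simp
      have h2 : (∏ r : Fin (m+1), ξ ((Fin.snoc i a : Fin (m+1) → Fin n) r))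
          = (∏ r : Fin m, ξ (i r)) * ξ a := by
        rw [Fin.prod_univ_castSucc]
        congr 1
        · exact Finset.prod_congr rfl fun r _ => by rw [congrFun h1 r]
        · rw [Fin.snoc_last]
      rw [h1, h2, Fin.snoc_last]
      unfold pd
      rw [← hφ i]
      ring
    rw [Finset.sum_congr rfl fun a _ => hsimp a, ← Finset.sum_mul]
    congr 1
    exact (fderiv_apply_eq_sum (φ i) (x + t • ξ) ξ).symm
  -- rewrite the LHS integral
  have hL : momRT ℓ (dsym u) x ξ = ∫ t : ℝ, t ^ ℓ * deriv Ψ t := by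
    unfold momRT
    congr 1
    funext t
    rw [hkey t]
  have hR : momRT (ℓ - 1) u x ξ = ∫ t : ℝ, t ^ (ℓ - 1) * Ψ t := by
    unfold momRT
    congr 1
    funext t
    rw [hΨ t]
  rw [hL, hR]
  -- integration by parts
  have hderiv : ⇑(SchwartzMap.derivCLM ℝ ℝ Ψ) = deriv Ψ := by
    funext t; exact SchwartzMap.derivCLM_apply ℝ Ψ t
  have huv' : Integrable ((fun t : ℝ => t ^ ℓ) * deriv Ψ) := by
    have h := integrable_pow_mul_schwartz ℓ (SchwartzMap.derivCLM ℝ ℝ Ψ)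
    rw [hderiv] at h
    exact h
  have hu'v : Integrable ((fun t : ℝ => (ℓ : ℝ) * t ^ (ℓ - 1)) * ⇑Ψ) := by
    have h := (integrable_pow_mul_schwartz (ℓ - 1) Ψ).const_mul (ℓ : ℝ)
    refine h.congr (Filter.Eventually.of_forall fun t => ?_)
    simp [Pi.mul_apply, mul_assoc]
  have huv : Integrable ((fun t : ℝ => t ^ ℓ) * ⇑Ψ) := integrable_pow_mul_schwartz ℓ Ψ
  have hibp := integral_mul_deriv_eq_deriv_mul_of_integrable
    (u := fun t : ℝ => t ^ ℓ) (u' := fun t : ℝ => (ℓ : ℝ) * t ^ (ℓ - 1))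
    (v := ⇑Ψ) (v' := deriv Ψ)
    (fun t _ => hasDerivAt_pow ℓ t) (fun t _ => Ψ.differentiableAt.hasDerivAt)
    huv' hu'v huv
  have hmul : ∫ t : ℝ, ((ℓ : ℝ) * t ^ (ℓ - 1)) * Ψ t = (ℓ : ℝ) * ∫ t : ℝ, t ^ (ℓ - 1) * Ψ t := by
    rw [← MeasureTheory.integral_const_mul]
    congr 1
    funext t
    ring
  rw [hibp, hmul]
  ring

end Aux3

/-- momentum ray transforms of potential-type fields:
for `g ∈ 𝒮(S^{m−s})` (here of rank `p = m − s`, so `d^s g` has rank `m = p + s`),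
`I^ℓ(d^s g) = (−1)^s C(ℓ,s) s! I^{ℓ−s} g` if `s ≤ ℓ` and `= 0` if `s > ℓ`,
at every point of `TSⁿ⁻¹`.  (The case `s = 1` gives `I^ℓ(d u) = −ℓ I^{ℓ−1} u`
and `I^0(d u) = 0`.) -/
theorem momRT_of_potential_field
    (n p s ℓ : ℕ)
    (g : (Fin p → Fin n) → En n → ℝ)
    (hg : IsSchwartzField g) (hgsym : IsSymField g) :
    ∀ x ξ : En n, ‖ξ‖ = 1 → ⟪x, ξ⟫ = 0 →
      momRT ℓ (dpow s g) x ξ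
        = if s ≤ ℓ then
            (-1 : ℝ) ^ s * (ℓ.choose s) * (s.factorial) * momRT (ℓ - s) g x ξ
          else 0 := by
  intro x ξ hξ _
  induction s generalizing ℓ with
  | zero =>
      simp [dpow]
  | succ s ih =>
      have hS : IsSchwartzField (dpow s g) := isSchwartzField_dpow s hg
      have hstep : momRT ℓ (dpow (s + 1) g) x ξ
          = -(ℓ : ℝ) * momRT (ℓ - 1) (dpow s g) x ξ :=
        momRT_dsym ℓ (dpow s g) hS x ξ hξ
      rcases Nat.eq_zero_or_pos ℓ with hℓ | hℓ
      · subst hℓ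
        rw [hstep]
        simp
      · obtain ⟨k, rfl⟩ : ∃ k, ℓ = k + 1 := ⟨ℓ - 1, by omega⟩
        rw [hstep]
        have hk1 : k + 1 - 1 = k := rfl
        rw [hk1, ih k]
        by_cases hsk : s ≤ k
        · rw [if_pos hsk, if_pos (by omega : s + 1 ≤ k + 1)]
          have he : k + 1 - (s + 1) = k - s := by omega
          rw [he]
          have hc : ((k + 1) * Nat.choose k s : ℝ)
              = (Nat.choose (k + 1) (s + 1) : ℝ) * (s + 1) := by
            exact_mod_cast Nat.add_one_mul_choose_eq k s
          rw [Nat.factorial_succ]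
          push_cast
          push_cast at hc
          rw [pow_succ]
          linear_combination (-((-1:ℝ)^s) * (s.factorial : ℝ) * momRT (k - s) g x ξ) * hc
        · rw [if_neg hsk, if_neg (by omega : ¬ s + 1 ≤ k + 1), mul_zero]
end
end

section
/- Let n ≥ 2, let y ∈ ℝⁿ be a nonzero vector, and let F be a symmetric m-tensor on ℝⁿ. If ⟨F, y^{⊗r} ⊗ ξ^{⊗(m−r)}⟩ = 0 for every 0 ≤ r ≤ m and every ξ ∈ ℝⁿ with ⟨y,ξ⟩ = 0, then F = 0. (Here ⟨F, w₁⊗⋯⊗w_m⟩ = F_{i₁…i_m} w₁^{i₁}⋯w_m^{i_m}, summation over repeated indices.) -/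
noncomputable section

open MeasureTheory Filter
open scoped RealInnerProductSpace BigOperators

namespace STVCaux

variable {n m : ℕ}

lemma sum_perm (F : (Fin m → Fin n) → ℝ) (hF : IsSymTensor F)
    (w : Fin m → En n) (π : Equiv.Perm (Fin m)) :
    ∑ i : Fin m → Fin n, F i * ∏ s, w (π s) (i s)
      = ∑ i : Fin m → Fin n, F i * ∏ s, w s (i s) := by
  refine Fintype.sum_equiv (Equiv.piCongrLeft' (fun _ => Fin n) π) _ _ (fun i => ?_)
  have h1 : (Equiv.piCongrLeft' (fun _ => Fin n) π) i = i ∘ ⇑π.symm := rfl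
  rw [h1, hF π.symm i]
  congr 1
  rw [← Equiv.prod_comp π (fun t => w t ((i ∘ ⇑π.symm) t))]
  exact Finset.prod_congr rfl (fun s _ => congrArg (w (π s)) (congrArg i (Equiv.symm_apply_apply π s)).symm)

lemma exists_perm_subset (S : Finset (Fin m)) :
    ∃ π : Equiv.Perm (Fin m), ∀ s : Fin m, (π s ∈ S ↔ (s : ℕ) < S.card) := by
  classical
  have hr : S.card ≤ m := by simpa using S.card_le_univ
  set T : Finset (Fin m) :=
    Finset.map ⟨fun a : Fin S.card => (⟨a, lt_of_lt_of_le a.2 hr⟩ : Fin m),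
      fun a b hab => by simpa [Fin.ext_iff] using hab⟩ Finset.univ with hT
  have hmemT : ∀ s : Fin m, s ∈ T ↔ (s : ℕ) < S.card := by
    intro s
    simp only [hT, Finset.mem_map, Finset.mem_univ, true_and, Function.Embedding.coeFn_mk]
    constructor
    · rintro ⟨a, rfl⟩; exact a.2
    · intro hs; exact ⟨⟨s, hs⟩, Fin.ext rfl⟩
  have hcardT : T.card = S.card := by simp [hT]
  have hcard1 : Fintype.card {x // x ∈ T} = Fintype.card {x // x ∈ S} := by
    simpa [Fintype.card_coe] using hcardT
  have hcard2 : Fintype.card {x // ¬ x ∈ T} = Fintype.card {x // ¬ x ∈ S} := by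
    rw [Fintype.card_subtype_compl, Fintype.card_subtype_compl]
    simp only [Fintype.card_coe, hcardT]
  let eS : {x // x ∈ T} ≃ {x // x ∈ S} := Fintype.equivOfCardEq hcard1
  let eC : {x // ¬ x ∈ T} ≃ {x // ¬ x ∈ S} := Fintype.equivOfCardEq hcard2
  refine ⟨(Equiv.sumCompl (· ∈ T)).symm.trans
    ((Equiv.sumCongr eS eC).trans (Equiv.sumCompl (· ∈ S))), fun s => ?_⟩
  by_cases hs : s ∈ T
  · rw [Equiv.trans_apply, Equiv.trans_apply,
      Equiv.sumCompl_symm_apply_of_pos hs]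
    simp only [Equiv.sumCongr_apply, Sum.map_inl, Equiv.sumCompl_apply_inl]
    exact iff_of_true (eS ⟨s, hs⟩).2 ((hmemT s).mp hs)
  · rw [Equiv.trans_apply, Equiv.trans_apply,
      Equiv.sumCompl_symm_apply_of_neg hs]
    simp only [Equiv.sumCongr_apply, Sum.map_inr, Equiv.sumCompl_apply_inr]
    exact iff_of_false (eC ⟨s, hs⟩).2 (fun hc => hs ((hmemT s).mpr hc))


/-- Real version of the alternating powerset sum. -/
lemma sum_powerset_neg_one_pow_card_real {α : Type*} [DecidableEq α] (x : Finset α) :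
    ∑ U ∈ x.powerset, (-1:ℝ) ^ U.card = if x = ∅ then 1 else 0 := by
  have h := Finset.sum_powerset_neg_one_pow_card (x := x)
  calc ∑ U ∈ x.powerset, (-1:ℝ) ^ U.card
      = ((∑ U ∈ x.powerset, (-1:ℤ) ^ U.card : ℤ) : ℝ) := by push_cast; rfl
    _ = _ := by rw [h]; split <;> simp

/-- Key inclusion–exclusion sum. -/
lemma alt_sum (T : Finset (Fin m)) :
    ∑ S ∈ (Finset.univ : Finset (Fin m)).powerset,
        (if T ⊆ S then (-1:ℝ) ^ (m - S.card) else 0)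
      = if T = Finset.univ then 1 else 0 := by
  classical
  rw [Finset.sum_ite, Finset.sum_const_zero, add_zero]
  have hbij : ∑ S ∈ (Finset.univ : Finset (Fin m)).powerset.filter (fun S => T ⊆ S),
      (-1:ℝ) ^ (m - S.card)
      = ∑ U ∈ (Finset.univ \ T).powerset, (-1:ℝ) ^ (m - T.card) * (-1:ℝ) ^ U.card := by
    refine Finset.sum_nbij' (fun S => S \ T) (fun U => T ∪ U) ?_ ?_ ?_ ?_ ?_
    · intro S hS
      rw [Finset.mem_filter] at hS
      exact Finset.mem_powerset.mpr (Finset.sdiff_subset_sdiff (Finset.subset_univ S) le_rfl)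
    · intro U hU
      rw [Finset.mem_powerset] at hU
      exact Finset.mem_filter.mpr ⟨Finset.mem_powerset.mpr (Finset.subset_univ _),
        Finset.subset_union_left⟩
    · intro S hS
      rw [Finset.mem_filter] at hS
      exact Finset.union_sdiff_of_subset hS.2
    · intro U hU
      rw [Finset.mem_powerset] at hU
      have hd : Disjoint T U := (Finset.sdiff_disjoint.mono_left hU).symm
      exact Finset.union_sdiff_cancel_left hd
    · intro S hS
      rw [Finset.mem_filter, Finset.mem_powerset] at hS
      have h1 : T.card ≤ S.card := Finset.card_le_card hS.2
      have h2 : S.card ≤ m := by simpa using S.card_le_univ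
      rw [Finset.card_sdiff_of_subset hS.2]
      have e1 : m - T.card = (m - S.card) + (S.card - T.card) := by omega
      have e2 : ((-1:ℝ)) ^ (S.card - T.card) * ((-1:ℝ)) ^ (S.card - T.card) = 1 := by
        rw [← pow_add]
        exact Even.neg_one_pow ⟨S.card - T.card, by ring⟩
      rw [e1, pow_add, mul_assoc, e2, mul_one]
  rw [hbij, ← Finset.mul_sum, sum_powerset_neg_one_pow_card_real]
  have hempty : (Finset.univ \ T = ∅) ↔ T = Finset.univ := by
    rw [Finset.sdiff_eq_empty_iff_subset, Finset.univ_subset_iff]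
  by_cases hT : T = Finset.univ
  · rw [if_pos hT, if_pos (hempty.mpr hT), hT, Finset.card_univ, Fintype.card_fin,
      Nat.sub_self, pow_zero, mul_one]
  · rw [if_neg hT, if_neg (fun he => hT (hempty.mp he)), mul_zero]

/-- Polarization: a symmetric tensor vanishing on the diagonal vanishes. -/
lemma polarize (F : (Fin m → Fin n) → ℝ) (hF : IsSymTensor F)
    (hG : ∀ v : En n, ∑ i : Fin m → Fin n, F i * ∏ s, v (i s) = 0) :
    ∀ j, F j = 0 := by
  classical
  intro j
  have hmemiff : ∀ (S : Finset (Fin m)) (g : Fin m → Fin m),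
      g ∈ Fintype.piFinset (fun _ : Fin m => S) ↔ Finset.image g Finset.univ ⊆ S := by
    intro S g
    rw [Fintype.mem_piFinset, Finset.image_subset_iff]
    simp
  -- Step 1: expansion of the diagonal evaluation at ∑_{k ∈ S} e_{j k}
  have step1 : ∀ S : Finset (Fin m),
      ∑ i : Fin m → Fin n, F i * ∏ s, (∑ k ∈ S, EuclideanSpace.single (j k) (1:ℝ)) (i s)
        = ∑ g ∈ Fintype.piFinset (fun _ : Fin m => S), F (j ∘ g) := by
    intro S
    have happ : ∀ a : Fin n, (∑ k ∈ S, EuclideanSpace.single (j k) (1:ℝ)) a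
        = ∑ k ∈ S, (if a = j k then (1:ℝ) else 0) := by
      intro a
      rw [WithLp.ofLp_sum, Finset.sum_apply]
      exact Finset.sum_congr rfl fun k _ => EuclideanSpace.single_apply (j k) 1 a
    have hprod : ∀ (g : Fin m → Fin m) (i : Fin m → Fin n),
        (∏ s, if i s = j (g s) then (1:ℝ) else 0) = if i = j ∘ g then 1 else 0 := by
      intro g i
      by_cases hig : i = j ∘ g
      · rw [if_pos hig]
        exact Finset.prod_eq_one fun s _ => if_pos (congrFun hig s)
      · rw [if_neg hig]
        obtain ⟨s, hs⟩ := Function.ne_iff.mp hig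
        exact Finset.prod_eq_zero (Finset.mem_univ s) (if_neg hs)
    calc ∑ i : Fin m → Fin n, F i * ∏ s, (∑ k ∈ S, EuclideanSpace.single (j k) (1:ℝ)) (i s)
        = ∑ i : Fin m → Fin n, F i *
            ∑ g ∈ Fintype.piFinset (fun _ : Fin m => S),
              ∏ s, (if i s = j (g s) then (1:ℝ) else 0) := by
          refine Finset.sum_congr rfl fun i _ => ?_
          congr 1
          calc ∏ s, (∑ k ∈ S, EuclideanSpace.single (j k) (1:ℝ)) (i s)
              = ∏ s, ∑ k ∈ S, (if i s = j k then (1:ℝ) else 0) :=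
                Finset.prod_congr rfl fun s _ => happ (i s)
            _ = _ := Finset.prod_univ_sum _ _
      _ = ∑ g ∈ Fintype.piFinset (fun _ : Fin m => S),
            ∑ i : Fin m → Fin n, F i * ∏ s, (if i s = j (g s) then (1:ℝ) else 0) := by
          simp_rw [Finset.mul_sum]
          exact Finset.sum_comm
      _ = ∑ g ∈ Fintype.piFinset (fun _ : Fin m => S), F (j ∘ g) := by
          refine Finset.sum_congr rfl fun g _ => ?_
          simp_rw [hprod g, mul_ite, mul_one, mul_zero]
          simp
  -- the alternating combination vanishes by hypothesis
  have zero : ∑ S ∈ (Finset.univ : Finset (Fin m)).powerset,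
      (-1:ℝ) ^ (m - S.card) * ∑ g ∈ Fintype.piFinset (fun _ : Fin m => S), F (j ∘ g) = 0 := by
    refine Finset.sum_eq_zero fun S _ => ?_
    rw [← step1 S, hG, mul_zero]
  -- and it also equals m! * F j
  have main : ∑ S ∈ (Finset.univ : Finset (Fin m)).powerset,
      (-1:ℝ) ^ (m - S.card) * ∑ g ∈ Fintype.piFinset (fun _ : Fin m => S), F (j ∘ g)
      = (m.factorial : ℝ) * F j := by
    calc ∑ S ∈ (Finset.univ : Finset (Fin m)).powerset,
          (-1:ℝ) ^ (m - S.card) * ∑ g ∈ Fintype.piFinset (fun _ : Fin m => S), F (j ∘ g)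
        = ∑ S ∈ (Finset.univ : Finset (Fin m)).powerset, ∑ g : Fin m → Fin m,
            (if Finset.image g Finset.univ ⊆ S then F (j ∘ g) * (-1:ℝ) ^ (m - S.card) else 0) := by
          refine Finset.sum_congr rfl fun S _ => ?_
          have h1 : ∀ g : Fin m → Fin m,
              (if Finset.image g Finset.univ ⊆ S then F (j ∘ g) * (-1:ℝ) ^ (m - S.card) else 0)
              = (if g ∈ Fintype.piFinset (fun _ : Fin m => S) then
                  F (j ∘ g) * (-1:ℝ) ^ (m - S.card) else 0) := fun g => by
            rw [if_congr (hmemiff S g).symm rfl rfl]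
          rw [Finset.sum_congr rfl fun g _ => h1 g, Finset.sum_ite_mem, Finset.univ_inter,
            ← Finset.sum_mul, mul_comm]
      _ = ∑ g : Fin m → Fin m, ∑ S ∈ (Finset.univ : Finset (Fin m)).powerset,
            (if Finset.image g Finset.univ ⊆ S then F (j ∘ g) * (-1:ℝ) ^ (m - S.card) else 0) :=
          Finset.sum_comm
      _ = ∑ g : Fin m → Fin m,
            F (j ∘ g) * (if Finset.image g Finset.univ = Finset.univ then 1 else 0) := by
          refine Finset.sum_congr rfl fun g _ => ?_
          have h2 : ∀ S : Finset (Fin m),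
              (if Finset.image g Finset.univ ⊆ S then F (j ∘ g) * (-1:ℝ) ^ (m - S.card) else 0)
              = F (j ∘ g) * (if Finset.image g Finset.univ ⊆ S then (-1:ℝ) ^ (m - S.card) else 0) :=
            fun S => by rw [mul_ite, mul_zero]
          rw [Finset.sum_congr rfl fun S _ => h2 S, ← Finset.mul_sum, alt_sum]
      _ = ∑ g ∈ Finset.univ.filter
            (fun g : Fin m → Fin m => Finset.image g Finset.univ = Finset.univ), F (j ∘ g) := by
          rw [Finset.sum_filter]
          exact Finset.sum_congr rfl fun g _ => by rw [mul_ite, mul_one, mul_zero]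
      _ = ∑ π : Equiv.Perm (Fin m), F (j ∘ π) := by
          refine (Finset.sum_bij (fun (π : Equiv.Perm (Fin m)) _ => ⇑π) ?_ ?_ ?_ ?_).symm
          · intro π _
            refine Finset.mem_filter.mpr ⟨Finset.mem_univ _, ?_⟩
            refine Finset.eq_univ_iff_forall.mpr fun b => Finset.mem_image.mpr
              ⟨π.symm b, Finset.mem_univ _, π.apply_symm_apply b⟩
          · intro π₁ _ π₂ _ hco
            exact Equiv.coe_fn_injective hco
          · intro g hg
            rw [Finset.mem_filter] at hg
            have hsurj : Function.Surjective g := by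
              intro b
              have hb : b ∈ Finset.image g Finset.univ := hg.2.symm ▸ Finset.mem_univ b
              obtain ⟨a, -, ha⟩ := Finset.mem_image.mp hb
              exact ⟨a, ha⟩
            exact ⟨Equiv.ofBijective g hsurj.bijective_of_finite, Finset.mem_univ _, rfl⟩
          · intro π _
            rfl
      _ = (m.factorial : ℝ) * F j := by
          rw [Finset.sum_congr rfl fun (π : Equiv.Perm (Fin m)) _ => hF π j,
            Finset.sum_const, Finset.card_univ, Fintype.card_perm, Fintype.card_fin,
            nsmul_eq_mul]
  rw [main] at zero
  have hfac : (m.factorial : ℝ) ≠ 0 := Nat.cast_ne_zero.mpr m.factorial_ne_zero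
  exact (mul_eq_zero.mp zero).resolve_left hfac

/-- The diagonal evaluation vanishes everywhere. -/
lemma diag_zero (y : En n) (hy : y ≠ 0) (F : (Fin m → Fin n) → ℝ) (hF : IsSymTensor F)
    (h : ∀ r, r ≤ m → ∀ ξ : En n, ⟪y, ξ⟫ = 0 →
      ∑ i : Fin m → Fin n,
        F i * ∏ s : Fin m, (if (s : ℕ) < r then y (i s) else ξ (i s)) = 0)
    (v : En n) : ∑ i : Fin m → Fin n, F i * ∏ s, v (i s) = 0 := by
  classical
  set c : ℝ := ⟪y, v⟫ / ⟪y, y⟫ with hc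
  set ξ : En n := v - c • y with hxidef
  have hyy : ⟪y, y⟫ ≠ 0 := inner_self_ne_zero.mpr hy
  have hxi : ⟪y, ξ⟫ = 0 := by
    rw [hxidef, inner_sub_right, real_inner_smul_right, hc,
      div_mul_cancel₀ _ hyy, sub_self]
  have hv : ∀ a, v a = c * y a + ξ a := by
    intro a
    simp only [hxidef, PiLp.sub_apply, PiLp.smul_apply, smul_eq_mul]
    ring
  calc ∑ i : Fin m → Fin n, F i * ∏ s, v (i s)
      = ∑ i : Fin m → Fin n, F i * ∏ s, (c * y (i s) + ξ (i s)) := by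
        refine Finset.sum_congr rfl fun i _ => ?_
        congr 1
        exact Finset.prod_congr rfl fun s _ => hv (i s)
    _ = ∑ S ∈ (Finset.univ : Finset (Fin m)).powerset, ∑ i : Fin m → Fin n,
          F i * ((∏ s ∈ S, (c * y (i s))) * ∏ s ∈ Finset.univ \ S, ξ (i s)) := by
        simp_rw [Finset.prod_add, Finset.mul_sum]
        exact Finset.sum_comm
    _ = 0 := by
        refine Finset.sum_eq_zero fun S _ => ?_
        have hS : S.card ≤ m := by simpa using S.card_le_univ
        obtain ⟨π, hπ⟩ := exists_perm_subset S
        have key : ∑ i : Fin m → Fin n,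
            F i * ∏ s, (if s ∈ S then y (i s) else ξ (i s)) = 0 := by
          have e1 : ∑ i : Fin m → Fin n, F i * ∏ s, (if s ∈ S then y (i s) else ξ (i s))
              = ∑ i : Fin m → Fin n, F i *
                  ∏ s, (fun t => if t ∈ S then y else ξ) s (i s) := by
            refine Finset.sum_congr rfl fun i _ => ?_
            congr 1
            refine Finset.prod_congr rfl fun s _ => ?_
            by_cases hs : s ∈ S <;> simp [hs]
          rw [e1, ← sum_perm F hF _ π]
          refine Eq.trans (Finset.sum_congr rfl fun i _ => ?_) (h S.card hS ξ hxi)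
          congr 1
          refine Finset.prod_congr rfl fun s _ => ?_
          simp only [hπ s]
          exact apply_ite (fun u : En n => u (i s)) ((s : ℕ) < S.card) y ξ
        have e2 : ∀ i : Fin m → Fin n,
            (∏ s ∈ S, (c * y (i s))) * ∏ s ∈ Finset.univ \ S, ξ (i s)
            = c ^ S.card * ∏ s, (if s ∈ S then y (i s) else ξ (i s)) := by
          intro i
          rw [Finset.prod_mul_distrib, Finset.prod_const, Finset.prod_ite,
            Finset.filter_mem_eq_inter, Finset.univ_inter, Finset.filter_not,
            Finset.filter_mem_eq_inter, Finset.univ_inter, mul_assoc]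
        calc ∑ i : Fin m → Fin n,
              F i * ((∏ s ∈ S, (c * y (i s))) * ∏ s ∈ Finset.univ \ S, ξ (i s))
            = c ^ S.card * ∑ i : Fin m → Fin n,
                F i * ∏ s, (if s ∈ S then y (i s) else ξ (i s)) := by
              rw [Finset.mul_sum]
              exact Finset.sum_congr rfl fun i _ => by rw [e2 i]; ring
          _ = 0 := by rw [key, mul_zero]

end STVCaux

/-- a symmetric `m`-tensor `F` vanishes if it is annihilated by all
tensors `y^{⊗r} ⊗ ξ^{⊗(m−r)}` with `0 ≤ r ≤ m` and `ξ ⊥ y`, for a fixed `y ≠ 0`. -/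
theorem symmetric_tensor_vanishing_criterion
    (n m : ℕ) (hn : 2 ≤ n) (y : En n) (hy : y ≠ 0)
    (F : (Fin m → Fin n) → ℝ) (hF : IsSymTensor F)
    (h : ∀ r, r ≤ m → ∀ ξ : En n, ⟪y, ξ⟫ = 0 →
      ∑ i : Fin m → Fin n,
        F i * ∏ s : Fin m, (if (s : ℕ) < r then y (i s) else ξ (i s)) = 0) :
    ∀ i, F i = 0 :=
  STVCaux.polarize F hF (STVCaux.diag_zero y hy F hF h)
end
end

section
/- Let 0 ≤ ℓ ≤ k ≤ m, let (φ⁰,…,φ^k) ∈ (𝒮(T𝕊^{n−1}))^{k+1}, define ψ^p (0 ≤ p ≤ ℓ) by ψ^p(x,ξ) = |ξ|^{m−2p−1} Σ_{r=0}^p (−1)^{p−r} C(p,r) |ξ|^r ⟨ξ,x⟩^{p−r} φ^r(x − (⟨x,ξ⟩/|ξ|²)ξ, ξ/|ξ|), and suppose g_s ∈ 𝒮(S^{m−s}) (0 ≤ s ≤ ℓ−1) satisfy ψ^p = Σ_{s=0}^p (−1)^s C(p,s) s! J^{p−s} g_s for 0 ≤ p ≤ ℓ−1. Set χ^ℓ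 = ((−1)^ℓ/ℓ!)(ψ^ℓ − Σ_{s=0}^{ℓ−1} (−1)^s C(ℓ,s) s! J^{ℓ−s} g_s), and define χ̃^ℓ on T𝕊^{n−1} by χ̃^ℓ = ((−1)^ℓ/ℓ!)(φ^ℓ − Σ_{s=0}^{ℓ−1} (−1)^s C(ℓ,s) s! I^{ℓ−s} g_s). Then χ̃^ℓ = χ^ℓ|_{T𝕊^{n−1}}, and for all (x,ξ) ∈ ℝⁿ×(ℝⁿ∖{0}): χ^ℓ(x,ξ) = |ξ|^{m−ℓ−1} χ̃^ℓ(x − (⟨x,ξ⟩/|ξ|²)ξ, ξ/|ξ|). -/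
noncomputable section

open MeasureTheory Filter
open scoped RealInnerProductSpace BigOperators

section Aux

open MeasureTheory

/-- Integrability of `u ↦ u^j · Φ(x' + u ξ')` for a Schwartz function `Φ` and a unit
vector `ξ'`. -/
lemma integrable_pow_mul_comp_line {n : ℕ} (Φ : SchwartzMap (En n) ℝ) (x' ξ' : En n)
    (hξ' : ‖ξ'‖ = 1) (j : ℕ) :
    MeasureTheory.Integrable (fun u : ℝ => u ^ j * Φ (x' + u • ξ')) := by
  have hd : ∀ u : ℝ, HasFDerivAt (fun v : ℝ => x' + v • ξ')
      ((1 : ℝ →L[ℝ] ℝ).smulRight ξ') u := by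
    intro u
    exact (((1 : ℝ →L[ℝ] ℝ).smulRight ξ').hasFDerivAt (x := u)).const_add x'
  have htg : Function.HasTemperateGrowth (fun u : ℝ => x' + u • ξ') := by
    apply Function.HasTemperateGrowth.of_fderiv (k := 1) (C := ‖x'‖ + ‖ξ'‖)
    · have h : (fderiv ℝ fun v : ℝ => x' + v • ξ') =
          fun _ => (1 : ℝ →L[ℝ] ℝ).smulRight ξ' := funext fun u => (hd u).fderiv
      rw [h]
      exact Function.HasTemperateGrowth.const _
    · exact fun u => (hd u).differentiableAt
    · intro u
      have h1 : ‖x' + u • ξ'‖ ≤ ‖x'‖ + ‖u‖ * ‖ξ'‖ := by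
        refine (norm_add_le _ _).trans ?_
        rw [norm_smul]
      have h2 : (0:ℝ) ≤ ‖u‖ := norm_nonneg _
      have h3 : (0:ℝ) ≤ ‖x'‖ := norm_nonneg _
      have h4 : (0:ℝ) ≤ ‖ξ'‖ := norm_nonneg _
      nlinarith
  have hup : ∃ (kk : ℕ) (C : ℝ), ∀ u : ℝ, ‖u‖ ≤ C * (1 + ‖x' + u • ξ'‖) ^ kk := by
    refine ⟨1, ‖x'‖ + 1, fun u => ?_⟩
    have h1 : ‖u • ξ'‖ = ‖u‖ := by rw [norm_smul, hξ', mul_one]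
    have h2 : ‖u • ξ'‖ ≤ ‖x' + u • ξ'‖ + ‖x'‖ := by
      calc ‖u • ξ'‖ = ‖(x' + u • ξ') - x'‖ := by rw [add_sub_cancel_left]
      _ ≤ ‖x' + u • ξ'‖ + ‖x'‖ := norm_sub_le _ _
    have h3 : (0:ℝ) ≤ ‖x'‖ := norm_nonneg _
    have h4 : (0:ℝ) ≤ ‖x' + u • ξ'‖ := norm_nonneg _
    nlinarith [h1 ▸ h2]
  let Ψ : SchwartzMap ℝ ℝ := SchwartzMap.compCLM (𝕜 := ℝ) htg hup Φ
  have hΨ : ∀ u : ℝ, Ψ u = Φ (x' + u • ξ') := fun u => rfl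
  have hint := Ψ.integrable_pow_mul volume j
  refine hint.mono' ?_ ?_
  · refine Continuous.aestronglyMeasurable ?_
    exact (continuous_pow j).mul (Φ.continuous.comp
      (continuous_const.add (continuous_id.smul continuous_const)))
  · filter_upwards with u
    rw [← hΨ u, norm_mul, norm_pow]

/-- Scaling law for the momentum ray transform under the projection
`(x,ξ) ↦ (x - (⟨x,ξ⟩/|ξ|²)ξ, ξ/|ξ|)`. -/
lemma momRT_scale {n μ : ℕ} (f : (Fin μ → Fin n) → En n → ℝ) (hf : IsSchwartzField f)
    (q : ℕ) (x ξ : En n) (hξ : ξ ≠ 0) :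
    momRT q f x ξ = ‖ξ‖ ^ ((μ : ℤ) - q - 1) *
      ∑ j ∈ Finset.range (q + 1),
        ((q.choose j : ℝ)) * (-((⟪x, ξ⟫ : ℝ) / ‖ξ‖)) ^ (q - j) *
          momRT j f (x - ((⟪x, ξ⟫ : ℝ) / ‖ξ‖ ^ 2) • ξ) (‖ξ‖⁻¹ • ξ) := by
  have ha : (0:ℝ) < ‖ξ‖ := norm_pos_iff.mpr hξ
  have hane : (‖ξ‖ : ℝ) ≠ 0 := ne_of_gt ha
  set a : ℝ := ‖ξ‖ with ha_def
  set c : ℝ := (⟪x, ξ⟫ : ℝ) / a with hc_def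
  set ξ' : En n := a⁻¹ • ξ with hxi_def
  set x' : En n := x - ((⟪x, ξ⟫ : ℝ) / a ^ 2) • ξ with hx_def
  have hξ'n : ‖ξ'‖ = 1 := by
    rw [hxi_def, norm_smul, norm_inv, norm_norm, ← ha_def, inv_mul_cancel₀ hane]
  have hpt : ∀ t : ℝ, x + t • ξ = x' + (a * t + c) • ξ' := by
    intro t
    rw [hx_def, hxi_def, hc_def]
    match_scalars <;> field_simp <;> ring_nf <;>
      rw [mul_assoc, mul_inv_cancel₀ hane, mul_one]
  have hcoordpt : ∀ jj : Fin n, ξ jj = a * ξ' jj := by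
    intro jj
    rw [hxi_def]
    have : (a⁻¹ • ξ) jj = a⁻¹ * ξ jj := rfl
    rw [this, ← mul_assoc, mul_inv_cancel₀ hane, one_mul]
  have hcoord : ∀ (i : Fin μ → Fin n), (∏ r, ξ (i r)) = a ^ μ * ∏ r, ξ' (i r) := by
    intro i
    calc (∏ r, ξ (i r)) = ∏ r : Fin μ, (a * ξ' (i r)) := by
          exact Finset.prod_congr rfl fun r _ => hcoordpt (i r)
    _ = (∏ _r : Fin μ, a) * ∏ r, ξ' (i r) := by rw [Finset.prod_mul_distrib]
    _ = a ^ μ * ∏ r, ξ' (i r) := by rw [Finset.prod_const, Finset.card_univ, Fintype.card_fin]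
  have hsum : ∀ y : En n, (∑ i : Fin μ → Fin n, f i y * ∏ r, ξ (i r))
      = a ^ μ * ∑ i : Fin μ → Fin n, f i y * ∏ r, ξ' (i r) := by
    intro y
    rw [Finset.mul_sum]
    exact Finset.sum_congr rfl fun i _ => by rw [hcoord i]; ring
  have hint : ∀ j : ℕ, MeasureTheory.Integrable
      (fun u : ℝ => u ^ j * ∑ i : Fin μ → Fin n, f i (x' + u • ξ') * ∏ r, ξ' (i r)) := by
    intro j
    have he : (fun u : ℝ => u ^ j * ∑ i : Fin μ → Fin n, f i (x' + u • ξ') * ∏ r, ξ' (i r))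
        = fun u : ℝ => ∑ i : Fin μ → Fin n, (∏ r, ξ' (i r)) * (u ^ j * f i (x' + u • ξ')) := by
      funext u
      rw [Finset.mul_sum]
      exact Finset.sum_congr rfl fun i _ => by ring
    rw [he]
    apply MeasureTheory.integrable_finset_sum
    intro i _
    obtain ⟨Φ, hΦ⟩ := hf i
    have h2 := (integrable_pow_mul_comp_line Φ x' ξ' hξ'n j).const_mul (∏ r, ξ' (i r))
    rw [hΦ] at h2
    exact h2
  have hmom' : ∀ j : ℕ, momRT j f x' ξ'
      = ∫ u : ℝ, u ^ j * ∑ i : Fin μ → Fin n, f i (x' + u • ξ') * ∏ r, ξ' (i r) := fun j => rfl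
  have step1 : momRT q f x ξ = a ^ μ *
      ∫ t : ℝ, t ^ q * ∑ i : Fin μ → Fin n, f i (x' + (a * t + c) • ξ') * ∏ r, ξ' (i r) := by
    rw [momRT, ← MeasureTheory.integral_const_mul]
    refine MeasureTheory.integral_congr_ae (Filter.Eventually.of_forall fun t => ?_)
    dsimp only
    rw [hpt t, hsum]
    ring
  have step2 : (∫ t : ℝ, t ^ q * ∑ i : Fin μ → Fin n, f i (x' + (a * t + c) • ξ') * ∏ r, ξ' (i r))
      = |a⁻¹| * ∫ u : ℝ,
          ((u - c) / a) ^ q * ∑ i : Fin μ → Fin n, f i (x' + u • ξ') * ∏ r, ξ' (i r) := by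
    have h1 : (fun t : ℝ => t ^ q *
          ∑ i : Fin μ → Fin n, f i (x' + (a * t + c) • ξ') * ∏ r, ξ' (i r))
        = fun t : ℝ => (fun u : ℝ => ((u + c - c) / a) ^ q *
            ∑ i : Fin μ → Fin n, f i (x' + (u + c) • ξ') * ∏ r, ξ' (i r)) (a * t) := by
      funext t
      have h2 : (a * t + c - c) / a = t := by field_simp; ring
      simp only [h2]
    rw [h1, MeasureTheory.Measure.integral_comp_mul_left
      (fun u : ℝ => ((u + c - c) / a) ^ q *
        ∑ i : Fin μ → Fin n, f i (x' + (u + c) • ξ') * ∏ r, ξ' (i r)) a,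
      MeasureTheory.integral_add_right_eq_self
        (fun u : ℝ => ((u - c) / a) ^ q *
          ∑ i : Fin μ → Fin n, f i (x' + u • ξ') * ∏ r, ξ' (i r)) c,
      smul_eq_mul]
  have step3 : (∫ u : ℝ,
        ((u - c) / a) ^ q * ∑ i : Fin μ → Fin n, f i (x' + u • ξ') * ∏ r, ξ' (i r))
      = (a⁻¹) ^ q * ∑ j ∈ Finset.range (q + 1),
          ((q.choose j : ℝ)) * (-c) ^ (q - j) * momRT j f x' ξ' := by
    have hHu : (fun u : ℝ =>
          ((u - c) / a) ^ q * ∑ i : Fin μ → Fin n, f i (x' + u • ξ') * ∏ r, ξ' (i r))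
        = fun u : ℝ => ∑ j ∈ Finset.range (q + 1),
            ((a⁻¹) ^ q * ((q.choose j : ℝ) * (-c) ^ (q - j))) *
              (u ^ j * ∑ i : Fin μ → Fin n, f i (x' + u • ξ') * ∏ r, ξ' (i r)) := by
      funext u
      have hb : ((u - c) / a) ^ q
          = (a⁻¹) ^ q * ∑ j ∈ Finset.range (q + 1), u ^ j * (-c) ^ (q - j) * (q.choose j : ℝ) := by
        rw [div_pow, div_eq_mul_inv, ← inv_pow, mul_comm, sub_eq_add_neg,
          (Commute.all u (-c)).add_pow q]
      rw [hb, mul_assoc, Finset.sum_mul, Finset.mul_sum]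
      exact Finset.sum_congr rfl fun j _ => by ring
    rw [hHu, MeasureTheory.integral_finset_sum _ (fun j _ => (hint j).const_mul _),
      Finset.mul_sum]
    refine Finset.sum_congr rfl fun j _ => ?_
    rw [MeasureTheory.integral_const_mul, hmom' j]
    ring
  rw [step1, step2, step3]
  have hz : a ^ ((μ : ℤ) - q - 1) = a ^ μ * a⁻¹ * (a⁻¹) ^ q := by
    rw [sub_sub, zpow_sub₀ hane, zpow_natCast, zpow_add₀ hane, zpow_natCast, zpow_one]
    ring
  rw [hz, abs_of_pos (inv_pos.mpr ha)]
  ring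

/-- The combinatorial core identity. -/
lemma combin (ℓ : ℕ) (c : ℝ) (F : ℕ → ℝ) (B : ℕ → ℕ → ℝ)
    (hF : ∀ r, r < ℓ → F r = ∑ s ∈ Finset.range (r + 1),
      (-1:ℝ) ^ s * (r.choose s : ℝ) * (s.factorial : ℝ) * B s (r - s)) :
    ∑ r ∈ Finset.range (ℓ + 1), (-1:ℝ) ^ (ℓ - r) * (ℓ.choose r : ℝ) * c ^ (ℓ - r) * F r
      - ∑ s ∈ Finset.range ℓ, (-1:ℝ) ^ s * (ℓ.choose s : ℝ) * (s.factorial : ℝ) *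
          ∑ j ∈ Finset.range (ℓ - s + 1),
            ((ℓ - s).choose j : ℝ) * (-c) ^ (ℓ - s - j) * B s j
    = F ℓ - ∑ s ∈ Finset.range ℓ,
        (-1:ℝ) ^ s * (ℓ.choose s : ℝ) * (s.factorial : ℝ) * B s (ℓ - s) := by
  rw [Finset.sum_range_succ]
  have h1 : (-1:ℝ) ^ (ℓ - ℓ) * (ℓ.choose ℓ : ℝ) * c ^ (ℓ - ℓ) * F ℓ = F ℓ := by
    simp [Nat.sub_self]
  rw [h1]
  have h2 : ∀ s ∈ Finset.range ℓ,
      (-1:ℝ) ^ s * (ℓ.choose s : ℝ) * (s.factorial : ℝ) *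
          ∑ j ∈ Finset.range (ℓ - s + 1),
            ((ℓ - s).choose j : ℝ) * (-c) ^ (ℓ - s - j) * B s j
      = ((-1:ℝ) ^ s * (ℓ.choose s : ℝ) * (s.factorial : ℝ) *
          ∑ j ∈ Finset.range (ℓ - s),
            ((ℓ - s).choose j : ℝ) * (-c) ^ (ℓ - s - j) * B s j)
        + (-1:ℝ) ^ s * (ℓ.choose s : ℝ) * (s.factorial : ℝ) * B s (ℓ - s) := by
    intro s _
    rw [Finset.sum_range_succ, Nat.sub_self, Nat.choose_self]
    push_cast
    ring
  rw [Finset.sum_congr rfl h2, Finset.sum_add_distrib]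
  have key : ∑ r ∈ Finset.range ℓ, (-1:ℝ) ^ (ℓ - r) * (ℓ.choose r : ℝ) * c ^ (ℓ - r) * F r
      = ∑ s ∈ Finset.range ℓ, (-1:ℝ) ^ s * (ℓ.choose s : ℝ) * (s.factorial : ℝ) *
          ∑ j ∈ Finset.range (ℓ - s),
            ((ℓ - s).choose j : ℝ) * (-c) ^ (ℓ - s - j) * B s j := by
    rw [Finset.sum_congr rfl (fun r hr => by rw [hF r (Finset.mem_range.mp hr)])]
    simp_rw [Finset.mul_sum]
    rw [Finset.sum_sigma', Finset.sum_sigma']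
    refine Finset.sum_nbij' (fun p => ⟨p.2, p.1 - p.2⟩) (fun p => ⟨p.1 + p.2, p.1⟩)
      ?_ ?_ ?_ ?_ ?_
    · rintro ⟨r, s⟩ hmem
      simp only [Finset.mem_sigma, Finset.mem_range] at hmem ⊢
      omega
    · rintro ⟨s, j⟩ hmem
      simp only [Finset.mem_sigma, Finset.mem_range] at hmem ⊢
      omega
    · rintro ⟨r, s⟩ hmem
      simp only [Finset.mem_sigma, Finset.mem_range] at hmem
      dsimp only
      have h : s + (r - s) = r := by omega
      simp only [h]
    · rintro ⟨s, j⟩ hmem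
      simp only [Finset.mem_sigma, Finset.mem_range] at hmem
      dsimp only
      have h : s + j - s = j := by omega
      simp only [h]
    · rintro ⟨r, s⟩ hmem
      simp only [Finset.mem_sigma, Finset.mem_range] at hmem
      obtain ⟨hrℓ, hsr⟩ := hmem
      have hsr' : s ≤ r := Nat.lt_succ_iff.mp hsr
      have hcc : (ℓ.choose r : ℝ) * (r.choose s : ℝ)
          = (ℓ.choose s : ℝ) * ((ℓ - s).choose (r - s) : ℝ) := by
        exact_mod_cast congrArg (Nat.cast (R := ℝ)) (Nat.choose_mul (n := ℓ) hsr')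
      have he : ℓ - s - (r - s) = ℓ - r := by omega
      show (-1:ℝ) ^ (ℓ - r) * (ℓ.choose r : ℝ) * c ^ (ℓ - r) *
          ((-1:ℝ) ^ s * (r.choose s : ℝ) * (s.factorial : ℝ) * B s (r - s))
        = (-1:ℝ) ^ s * (ℓ.choose s : ℝ) * (s.factorial : ℝ) *
          (((ℓ - s).choose (r - s) : ℝ) * (-c) ^ (ℓ - s - (r - s)) * B s (r - s))
      rw [he, neg_pow]
      linear_combination ((-1:ℝ) ^ (ℓ - r) * (-1:ℝ) ^ s * c ^ (ℓ - r) * (s.factorial : ℝ) *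
        B s (r - s)) * hcc
  linarith [key]

end Aux

/-- the restriction of `χ^ℓ` to `TSⁿ⁻¹` equals
`χ̃^ℓ = ((−1)^ℓ/ℓ!)(φ^ℓ − Σ_{s<ℓ} (−1)^s C(ℓ,s) s! I^{ℓ−s} g_s)`, and `χ^ℓ` is
recovered from `χ̃^ℓ` by
`χ^ℓ(x,ξ) = |ξ|^{m−ℓ−1} χ̃^ℓ(x − (⟨x,ξ⟩/|ξ|²)ξ, ξ/|ξ|)`. -/
theorem chi_restriction_and_extension
    (n m k ℓ : ℕ) (hℓ : ℓ ≤ k) (hkm : k ≤ m)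
    (φ : ℕ → En n → En n → ℝ) (hφ : ∀ r, r ≤ k → IsSchwartzOnTS (φ r))
    (ψ : ℕ → En n → En n → ℝ)
    (hψ : ∀ p, p ≤ ℓ → ∀ x ξ : En n, ξ ≠ 0 →
      ψ p x ξ = ‖ξ‖ ^ ((m : ℤ) - 2 * p - 1) *
        ∑ r ∈ Finset.range (p + 1),
          (-1 : ℝ) ^ (p - r) * (p.choose r) * ‖ξ‖ ^ r * (⟪ξ, x⟫ : ℝ) ^ (p - r) *
            φ r (x - ((⟪x, ξ⟫ : ℝ) / ‖ξ‖ ^ 2) • ξ) (‖ξ‖⁻¹ • ξ))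
    (g : (s : ℕ) → (Fin (m - s) → Fin n) → En n → ℝ)
    (hg : ∀ s, s < ℓ → IsSchwartzField (g s) ∧ IsSymField (g s))
    (hrel : ∀ p, p < ℓ → ∀ x ξ : En n, ξ ≠ 0 →
      ψ p x ξ = ∑ s ∈ Finset.range (p + 1),
        (-1 : ℝ) ^ s * (p.choose s) * (s.factorial) * momRT (p - s) (g s) x ξ)
    (χ : En n → En n → ℝ)
    (hχ : ∀ x ξ : En n, χ x ξ = ((-1 : ℝ) ^ ℓ / (ℓ.factorial : ℝ)) *
      (ψ ℓ x ξ - ∑ s ∈ Finset.range ℓ,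
        (-1 : ℝ) ^ s * (ℓ.choose s) * (s.factorial) * momRT (ℓ - s) (g s) x ξ))
    (χt : En n → En n → ℝ)
    (hχt : ∀ x ξ : En n, χt x ξ = ((-1 : ℝ) ^ ℓ / (ℓ.factorial : ℝ)) *
      (φ ℓ x ξ - ∑ s ∈ Finset.range ℓ,
        (-1 : ℝ) ^ s * (ℓ.choose s) * (s.factorial) * momRT (ℓ - s) (g s) x ξ)) :
    (∀ x ξ : En n, ‖ξ‖ = 1 → ⟪x, ξ⟫ = 0 → χt x ξ = χ x ξ) ∧
    (∀ x ξ : En n, ξ ≠ 0 →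
      χ x ξ = ‖ξ‖ ^ ((m : ℤ) - ℓ - 1) *
        χt (x - ((⟪x, ξ⟫ : ℝ) / ‖ξ‖ ^ 2) • ξ) (‖ξ‖⁻¹ • ξ)) := by
  -- the restriction of `ψ p` to `TSⁿ⁻¹` is `φ p`
  have hTS : ∀ p, p ≤ ℓ → ∀ x ξ : En n, ‖ξ‖ = 1 → ⟪x, ξ⟫ = 0 → ψ p x ξ = φ p x ξ := by
    intro p hp x ξ h1 h2
    have hξ0 : ξ ≠ 0 := by
      intro h
      rw [h, norm_zero] at h1
      exact one_ne_zero h1.symm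
    have h2' : (⟪ξ, x⟫ : ℝ) = 0 := by rw [real_inner_comm]; exact h2
    rw [hψ p hp x ξ hξ0, h1, h2, h2']
    rw [Finset.sum_eq_single p]
    · simp [Nat.sub_self]
    · intro b hb hbp
      have hblt : b < p := by
        have := Finset.mem_range.mp hb
        omega
      have : p - b ≠ 0 := by omega
      simp [zero_pow this]
    · intro h
      exact absurd (Finset.self_mem_range_succ p) h
  constructor
  · intro x ξ h1 h2
    rw [hχt x ξ, hχ x ξ, hTS ℓ le_rfl x ξ h1 h2]
  · intro x ξ hξ
    have ha : (0:ℝ) < ‖ξ‖ := norm_pos_iff.mpr hξ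
    have hane : (‖ξ‖ : ℝ) ≠ 0 := ne_of_gt ha
    have hξ'n : ‖(‖ξ‖⁻¹ • ξ : En n)‖ = 1 := by
      rw [norm_smul, norm_inv, norm_norm, inv_mul_cancel₀ hane]
    have hξ'0 : (‖ξ‖⁻¹ • ξ : En n) ≠ 0 := by
      intro h
      rw [h, norm_zero] at hξ'n
      exact one_ne_zero hξ'n.symm
    have hinner' : (⟪x - ((⟪x, ξ⟫ : ℝ) / ‖ξ‖ ^ 2) • ξ, ‖ξ‖⁻¹ • ξ⟫ : ℝ) = 0 := by
      rw [inner_sub_left, real_inner_smul_right, real_inner_smul_right,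
        real_inner_smul_left, real_inner_self_eq_norm_sq]
      field_simp
      ring
    have hF : ∀ r, r < ℓ →
        φ r (x - ((⟪x, ξ⟫ : ℝ) / ‖ξ‖ ^ 2) • ξ) (‖ξ‖⁻¹ • ξ)
          = ∑ s ∈ Finset.range (r + 1), (-1:ℝ) ^ s * (r.choose s : ℝ) * (s.factorial : ℝ) *
              momRT (r - s) (g s) (x - ((⟪x, ξ⟫ : ℝ) / ‖ξ‖ ^ 2) • ξ) (‖ξ‖⁻¹ • ξ) := by
      intro r hr
      rw [← hTS r (le_of_lt hr) _ _ hξ'n hinner']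
      exact hrel r hr _ _ hξ'0
    have key := combin ℓ ((⟪x, ξ⟫ : ℝ) / ‖ξ‖)
      (fun r => φ r (x - ((⟪x, ξ⟫ : ℝ) / ‖ξ‖ ^ 2) • ξ) (‖ξ‖⁻¹ • ξ))
      (fun s j => momRT j (g s) (x - ((⟪x, ξ⟫ : ℝ) / ‖ξ‖ ^ 2) • ξ) (‖ξ‖⁻¹ • ξ)) hF
    rw [hχ x ξ, hχt]
    have hsuf : ψ ℓ x ξ - ∑ s ∈ Finset.range ℓ,
          (-1:ℝ) ^ s * (ℓ.choose s : ℝ) * (s.factorial : ℝ) * momRT (ℓ - s) (g s) x ξ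
        = ‖ξ‖ ^ ((m : ℤ) - ℓ - 1) *
          (φ ℓ (x - ((⟪x, ξ⟫ : ℝ) / ‖ξ‖ ^ 2) • ξ) (‖ξ‖⁻¹ • ξ)
            - ∑ s ∈ Finset.range ℓ,
                (-1:ℝ) ^ s * (ℓ.choose s : ℝ) * (s.factorial : ℝ) *
                  momRT (ℓ - s) (g s) (x - ((⟪x, ξ⟫ : ℝ) / ‖ξ‖ ^ 2) • ξ) (‖ξ‖⁻¹ • ξ)) := by
      rw [hψ ℓ le_rfl x ξ hξ]
      have hS1 : ∀ s ∈ Finset.range ℓ,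
          (-1:ℝ) ^ s * (ℓ.choose s : ℝ) * (s.factorial : ℝ) * momRT (ℓ - s) (g s) x ξ
          = ‖ξ‖ ^ ((m : ℤ) - ℓ - 1) *
              ((-1:ℝ) ^ s * (ℓ.choose s : ℝ) * (s.factorial : ℝ) *
                ∑ j ∈ Finset.range (ℓ - s + 1),
                  ((ℓ - s).choose j : ℝ) * (-((⟪x, ξ⟫ : ℝ) / ‖ξ‖)) ^ (ℓ - s - j) *
                    momRT j (g s) (x - ((⟪x, ξ⟫ : ℝ) / ‖ξ‖ ^ 2) • ξ) (‖ξ‖⁻¹ • ξ)) := by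
        intro s hs
        have hs' : s < ℓ := Finset.mem_range.mp hs
        rw [momRT_scale (g s) (hg s hs').1 (ℓ - s) x ξ hξ]
        have hzz : ((m - s : ℕ) : ℤ) - ((ℓ - s : ℕ) : ℤ) - 1 = (m : ℤ) - ℓ - 1 := by
          have h1 : s ≤ m := le_trans (le_of_lt hs') (le_trans hℓ hkm)
          have h2 : s ≤ ℓ := le_of_lt hs'
          omega
        rw [hzz]
        ring
      rw [Finset.sum_congr rfl hS1, ← Finset.mul_sum]
      have hψsum : ‖ξ‖ ^ ((m : ℤ) - 2 * ℓ - 1) *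
          ∑ r ∈ Finset.range (ℓ + 1),
            (-1:ℝ) ^ (ℓ - r) * (ℓ.choose r : ℝ) * ‖ξ‖ ^ r * (⟪ξ, x⟫ : ℝ) ^ (ℓ - r) *
              φ r (x - ((⟪x, ξ⟫ : ℝ) / ‖ξ‖ ^ 2) • ξ) (‖ξ‖⁻¹ • ξ)
          = ‖ξ‖ ^ ((m : ℤ) - ℓ - 1) *
            ∑ r ∈ Finset.range (ℓ + 1),
              (-1:ℝ) ^ (ℓ - r) * (ℓ.choose r : ℝ) * ((⟪x, ξ⟫ : ℝ) / ‖ξ‖) ^ (ℓ - r) *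
                φ r (x - ((⟪x, ξ⟫ : ℝ) / ‖ξ‖ ^ 2) • ξ) (‖ξ‖⁻¹ • ξ) := by
        rw [Finset.mul_sum, Finset.mul_sum]
        refine Finset.sum_congr rfl fun r hr => ?_
        have hr' : r ≤ ℓ := Nat.lt_succ_iff.mp (Finset.mem_range.mp hr)
        have hpow : ‖ξ‖ ^ ((m : ℤ) - 2 * ℓ - 1) * (‖ξ‖ ^ r * ‖ξ‖ ^ (ℓ - r)) =
            ‖ξ‖ ^ ((m : ℤ) - ℓ - 1) := by
          rw [← pow_add, ← zpow_natCast ‖ξ‖ (r + (ℓ - r)), ← zpow_add₀ hane]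
          congr 1
          omega
        have hin : (⟪ξ, x⟫ : ℝ) = ((⟪x, ξ⟫ : ℝ) / ‖ξ‖) * ‖ξ‖ := by
          rw [real_inner_comm]
          field_simp
        rw [hin, mul_pow]
        linear_combination ((-1:ℝ) ^ (ℓ - r) * (ℓ.choose r : ℝ) *
          ((⟪x, ξ⟫ : ℝ) / ‖ξ‖) ^ (ℓ - r) *
          φ r (x - ((⟪x, ξ⟫ : ℝ) / ‖ξ‖ ^ 2) • ξ) (‖ξ‖⁻¹ • ξ)) * hpow
      rw [hψsum]
      linear_combination (‖ξ‖ ^ ((m : ℤ) - ℓ - 1)) * key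
    linear_combination ((-1:ℝ) ^ ℓ / (ℓ.factorial : ℝ)) * hsuf
end
end

section
/- Let r ≥ 0 and let h ∈ 𝒮(S^r) be a symmetric r-tensor field on ℝⁿ with Schwartz components. Then for all indices 1 ≤ i₁,j₁,…,i_{r+1},j_{r+1} ≤ n the function J^0 h on ℝⁿ×(ℝⁿ∖{0}) satisfies J_{i_{r+1}j_{r+1}} ⋯ J_{i₂j₂} J_{i₁j₁} (J^0 h) = 0, where J_{ij} = ∂²/∂x^i∂ξ^j − ∂²/∂x^j∂ξ^i. -/
noncomputable section

open MeasureTheory Filter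
open scoped RealInnerProductSpace BigOperators

namespace JohnProof

open SchwartzMap MeasureTheory

variable {n : ℕ}

/-- Line integral with weight `t^q`. -/
def lineInt (q : ℕ) (g : En n → ℝ) (x ξ : En n) : ℝ :=
  ∫ t : ℝ, t ^ q * g (x + t • ξ)

/-- Partial derivative of a Schwartz function, as a Schwartz function. -/
def Pd (i : Fin n) (g : SchwartzMap (En n) ℝ) : SchwartzMap (En n) ℝ :=
  LineDeriv.lineDerivOp (EuclideanSpace.single i (1 : ℝ)) g

lemma Pd_apply (i : Fin n) (g : SchwartzMap (En n) ℝ) (y : En n) :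
    Pd i g y = fderiv ℝ g y (EuclideanSpace.single i 1) :=
  SchwartzMap.lineDerivOp_apply_eq_fderiv (EuclideanSpace.single i 1) g y

lemma decay1 {V : Type*} [NormedAddCommGroup V] [NormedSpace ℝ V]
    (f : SchwartzMap (En n) V) (k : ℕ) :
    ∃ C : ℝ, ∀ y : En n, (1 + ‖y‖) ^ k * ‖f y‖ ≤ C := by
  refine ⟨2 ^ k * (SchwartzMap.seminorm ℝ 0 0 f + SchwartzMap.seminorm ℝ k 0 f), fun y => ?_⟩
  have h0 : ‖f y‖ ≤ SchwartzMap.seminorm ℝ 0 0 f := by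
    simpa using SchwartzMap.norm_pow_mul_le_seminorm ℝ f 0 y
  have hk : ‖y‖ ^ k * ‖f y‖ ≤ SchwartzMap.seminorm ℝ k 0 f :=
    SchwartzMap.norm_pow_mul_le_seminorm ℝ f k y
  have hnf : (0:ℝ) ≤ ‖f y‖ := norm_nonneg _
  have hny : (0:ℝ) ≤ ‖y‖ := norm_nonneg _
  have h2k : (0:ℝ) < 2 ^ k := by positivity
  have hpk : (0:ℝ) ≤ ‖y‖ ^ k := by positivity
  have hpow : (1 + ‖y‖) ^ k ≤ 2 ^ k * (1 + ‖y‖ ^ k) := by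
    rcases le_total ‖y‖ 1 with hc | hc
    · calc (1 + ‖y‖) ^ k ≤ 2 ^ k := by
            apply pow_le_pow_left₀ (by positivity) (by linarith)
        _ ≤ 2 ^ k * (1 + ‖y‖ ^ k) := by nlinarith
    · calc (1 + ‖y‖) ^ k ≤ (2 * ‖y‖) ^ k := by
            apply pow_le_pow_left₀ (by positivity) (by linarith)
        _ = 2 ^ k * ‖y‖ ^ k := mul_pow _ _ _
        _ ≤ 2 ^ k * (1 + ‖y‖ ^ k) := by nlinarith
  calc (1 + ‖y‖) ^ k * ‖f y‖ ≤ (2 ^ k * (1 + ‖y‖ ^ k)) * ‖f y‖ :=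
        mul_le_mul_of_nonneg_right hpow hnf
    _ = 2 ^ k * (‖f y‖ + ‖y‖ ^ k * ‖f y‖) := by ring
    _ ≤ 2 ^ k * (SchwartzMap.seminorm ℝ 0 0 f + SchwartzMap.seminorm ℝ k 0 f) := by
        have := add_le_add h0 hk
        nlinarith

lemma dom_bound {V : Type*} [NormedAddCommGroup V] [NormedSpace ℝ V]
    (f : SchwartzMap (En n) V) (q : ℕ) (a R : ℝ) (ha : 0 < a) (hR : 0 ≤ R) :
    ∃ K : ℝ, ∀ (t : ℝ) (y : En n), a * |t| ≤ ‖y‖ + R →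
      |t| ^ q * ‖f y‖ ≤ K * (1 + t ^ 2)⁻¹ := by
  obtain ⟨C, hC⟩ := decay1 f (q + 2)
  set m : ℝ := min 1 (a ^ 2) with hm
  have hmpos : 0 < m := lt_min one_pos (by positivity)
  have hapos : (0:ℝ) < a ^ q := by positivity
  refine ⟨C * (1 + R) ^ (q + 2) / (a ^ q * m), fun t y hty => ?_⟩
  have h1t : (0:ℝ) < 1 + t ^ 2 := by positivity
  have key : (a ^ q * m) * ((|t| ^ q * ‖f y‖) * (1 + t ^ 2)) ≤ C * (1 + R) ^ (q + 2) := by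
    have h4 : a ^ q * |t| ^ q ≤ (1 + a * |t|) ^ q := by
      rw [← mul_pow]
      exact pow_le_pow_left₀ (by positivity) (by nlinarith [abs_nonneg t]) q
    have h5 : m * (1 + t ^ 2) ≤ (1 + a * |t|) ^ 2 := by
      have habs : (a * |t|) ^ 2 = a ^ 2 * t ^ 2 := by rw [mul_pow, sq_abs]
      rcases le_total (a ^ 2) 1 with hc | hc
      · rw [hm, min_eq_right hc]
        nlinarith [mul_nonneg ha.le (abs_nonneg t)]
      · rw [hm, min_eq_left hc]
        nlinarith [mul_nonneg ha.le (abs_nonneg t)]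
    have h6 : (a ^ q * |t| ^ q) * (m * (1 + t ^ 2)) ≤ (1 + a * |t|) ^ q * (1 + a * |t|) ^ 2 :=
      mul_le_mul h4 h5 (by positivity) (by positivity)
    rw [← pow_add] at h6
    have h2 : (1 + a * |t|) ^ (q + 2) ≤ ((1 + R) * (1 + ‖y‖)) ^ (q + 2) := by
      apply pow_le_pow_left₀ (by positivity)
      nlinarith [norm_nonneg y, abs_nonneg t, mul_nonneg hR (norm_nonneg y)]
    have h3 : (1 + a * |t|) ^ (q + 2) * ‖f y‖ ≤ (1 + R) ^ (q + 2) * C := by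
      rw [mul_pow] at h2
      calc (1 + a * |t|) ^ (q + 2) * ‖f y‖
          ≤ ((1 + R) ^ (q + 2) * (1 + ‖y‖) ^ (q + 2)) * ‖f y‖ :=
            mul_le_mul_of_nonneg_right h2 (norm_nonneg _)
        _ = (1 + R) ^ (q + 2) * ((1 + ‖y‖) ^ (q + 2) * ‖f y‖) := by ring
        _ ≤ (1 + R) ^ (q + 2) * C := by
            apply mul_le_mul_of_nonneg_left (hC y) (by positivity)
    calc (a ^ q * m) * ((|t| ^ q * ‖f y‖) * (1 + t ^ 2))
        = ((a ^ q * |t| ^ q) * (m * (1 + t ^ 2))) * ‖f y‖ := by ring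
      _ ≤ (1 + a * |t|) ^ (q + 2) * ‖f y‖ := mul_le_mul_of_nonneg_right h6 (norm_nonneg _)
      _ ≤ (1 + R) ^ (q + 2) * C := h3
      _ = C * (1 + R) ^ (q + 2) := mul_comm _ _
  rw [← one_div, div_mul_div_comm, mul_one, le_div_iff₀ (by positivity)]
  calc |t| ^ q * ‖f y‖ * (a ^ q * m * (1 + t ^ 2))
      = (a ^ q * m) * ((|t| ^ q * ‖f y‖) * (1 + t ^ 2)) := by ring
    _ ≤ C * (1 + R) ^ (q + 2) := key

lemma norm_mul_abs_le (x ξ : En n) (t : ℝ) : ‖ξ‖ * |t| ≤ ‖x + t • ξ‖ + ‖x‖ := by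
  have h1 : ‖(x + t • ξ) - x‖ ≤ ‖x + t • ξ‖ + ‖x‖ := norm_sub_le _ _
  rw [add_sub_cancel_left, norm_smul, Real.norm_eq_abs] at h1
  linarith [h1]

lemma integrable_line {V : Type*} [NormedAddCommGroup V] [NormedSpace ℝ V]
    (f : SchwartzMap (En n) V) (q : ℕ) (x ξ : En n) (hξ : ξ ≠ 0) :
    Integrable (fun t : ℝ => t ^ q • f (x + t • ξ)) := by
  obtain ⟨K, hK⟩ := dom_bound f q ‖ξ‖ ‖x‖ (norm_pos_iff.mpr hξ) (norm_nonneg x)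
  have hcont : Continuous fun t : ℝ => t ^ q • f (x + t • ξ) :=
    (continuous_pow q).smul
      (f.continuous.comp (continuous_const.add (continuous_id.smul continuous_const)))
  refine (integrable_inv_one_add_sq.const_mul K).mono' hcont.aestronglyMeasurable ?_
  refine Filter.Eventually.of_forall fun t => ?_
  have hin : ‖ξ‖ * |t| ≤ ‖x + t • ξ‖ + ‖x‖ := norm_mul_abs_le x ξ t
  calc ‖t ^ q • f (x + t • ξ)‖ = |t| ^ q * ‖f (x + t • ξ)‖ := by
        rw [norm_smul, Real.norm_eq_abs, abs_pow]
    _ ≤ K * (1 + t ^ 2)⁻¹ := hK t _ hin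

lemma integrable_line_mul (g : SchwartzMap (En n) ℝ) (q : ℕ) (x ξ : En n) (hξ : ξ ≠ 0) :
    Integrable (fun t : ℝ => t ^ q * g (x + t • ξ)) := by
  simpa [smul_eq_mul] using integrable_line g q x ξ hξ

lemma fderiv_eq_clm (g : SchwartzMap (En n) ℝ) :
    (fun y : En n => fderiv ℝ g y) = ⇑(SchwartzMap.fderivCLM ℝ (En n) ℝ g) := by
  funext y; rw [SchwartzMap.fderivCLM_apply]

lemma hasFDerivAt_lineInt_x (q : ℕ) (g : SchwartzMap (En n) ℝ) (x ξ : En n) (hξ : ξ ≠ 0) :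
    HasFDerivAt (fun x' => lineInt q (⇑g) x' ξ)
      (∫ t : ℝ, t ^ q • (fderiv ℝ g (x + t • ξ))) x := by
  have hξn : 0 < ‖ξ‖ := norm_pos_iff.mpr hξ
  obtain ⟨K, hK⟩ := dom_bound (SchwartzMap.fderivCLM ℝ (En n) ℝ g) q ‖ξ‖ (‖x‖ + 1) hξn (by positivity)
  have hDcont : Continuous fun y : En n => fderiv ℝ g y := by
    rw [fderiv_eq_clm]; exact (SchwartzMap.fderivCLM ℝ (En n) ℝ g).continuous
  have haffine : ∀ t : ℝ, Continuous fun x' : En n => x' + t • ξ := fun t =>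
    continuous_id.add continuous_const
  have hmeas : ∀ x' : En n, AEStronglyMeasurable (fun t : ℝ => t ^ q * g (x' + t • ξ)) volume :=
    fun x' => ((continuous_pow q).mul
      (g.continuous.comp (continuous_const.add (continuous_id.smul continuous_const)))).aestronglyMeasurable
  have hF'meas : AEStronglyMeasurable (fun t : ℝ => t ^ q • fderiv ℝ g (x + t • ξ)) volume := by
    apply Continuous.aestronglyMeasurable
    exact (continuous_pow q).smul
      (hDcont.comp (continuous_const.add (continuous_id.smul continuous_const)))
  have hbound : ∀ᵐ t : ℝ, ∀ x' ∈ Metric.ball x 1,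
      ‖t ^ q • fderiv ℝ g (x' + t • ξ)‖ ≤ K * (1 + t ^ 2)⁻¹ := by
    refine Filter.Eventually.of_forall fun t x' hx' => ?_
    have hx'n : ‖x'‖ ≤ ‖x‖ + 1 := by
      have h1 := mem_ball_iff_norm.mp hx'
      have h2 := norm_sub_norm_le x' x
      linarith
    have hin : ‖ξ‖ * |t| ≤ ‖x' + t • ξ‖ + (‖x‖ + 1) := by
      have := norm_mul_abs_le x' ξ t
      linarith
    have := hK t (x' + t • ξ) hin
    calc ‖t ^ q • fderiv ℝ g (x' + t • ξ)‖
        = |t| ^ q * ‖(SchwartzMap.fderivCLM ℝ (En n) ℝ g) (x' + t • ξ)‖ := by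
          rw [norm_smul, Real.norm_eq_abs, abs_pow, SchwartzMap.fderivCLM_apply]
      _ ≤ K * (1 + t ^ 2)⁻¹ := this
  have hdiff : ∀ᵐ t : ℝ, ∀ x' ∈ Metric.ball x 1,
      HasFDerivAt (fun x'' => t ^ q * g (x'' + t • ξ)) (t ^ q • fderiv ℝ g (x' + t • ξ)) x' := by
    refine Filter.Eventually.of_forall fun t x' _ => ?_
    have h1 : HasFDerivAt (fun x'' : En n => x'' + t • ξ)
        (ContinuousLinearMap.id ℝ (En n)) x' := (hasFDerivAt_id x').add_const (t • ξ)
    have h2 : HasFDerivAt (⇑g) (fderiv ℝ g (x' + t • ξ)) (x' + t • ξ) :=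
      g.differentiableAt.hasFDerivAt
    have h3 := h2.comp x' h1
    rw [ContinuousLinearMap.comp_id] at h3
    exact h3.const_mul (t ^ q)
  have := hasFDerivAt_integral_of_dominated_of_fderiv_le (𝕜 := ℝ) (μ := volume)
    (F := fun (x' : En n) (t : ℝ) => t ^ q * g (x' + t • ξ))
    (F' := fun (x' : En n) (t : ℝ) => t ^ q • fderiv ℝ g (x' + t • ξ))
    (x₀ := x) (bound := fun t => K * (1 + t ^ 2)⁻¹) (Metric.ball_mem_nhds x one_pos)
    (Filter.Eventually.of_forall fun x' => hmeas x')
    (integrable_line_mul g q x ξ hξ)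
    hF'meas hbound (integrable_inv_one_add_sq.const_mul K) hdiff
  exact this

lemma lineInt_deriv_eval (q : ℕ) (g : SchwartzMap (En n) ℝ) (x ξ : En n) (hξ : ξ ≠ 0)
    (i : Fin n) :
    (∫ t : ℝ, t ^ q • (fderiv ℝ g (x + t • ξ))) (EuclideanSpace.single i 1)
      = lineInt q (⇑(Pd i g)) x ξ := by
  have hint : Integrable (fun t : ℝ => t ^ q • (SchwartzMap.fderivCLM ℝ (En n) ℝ g) (x + t • ξ)) :=
    integrable_line (SchwartzMap.fderivCLM ℝ (En n) ℝ g) q x ξ hξ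
  have hfun : (fun t : ℝ => t ^ q • fderiv ℝ g (x + t • ξ))
      = fun t : ℝ => t ^ q • (SchwartzMap.fderivCLM ℝ (En n) ℝ g) (x + t • ξ) := by
    funext t; rw [SchwartzMap.fderivCLM_apply]
  rw [hfun, ContinuousLinearMap.integral_apply hint]
  unfold lineInt
  exact integral_congr_ae (Filter.Eventually.of_forall fun t => by
    simp only [ContinuousLinearMap.smul_apply, SchwartzMap.fderivCLM_apply, Pd_apply, smul_eq_mul])

lemma hasFDerivAt_lineInt_xi (q : ℕ) (g : SchwartzMap (En n) ℝ) (x ξ : En n) (hξ : ξ ≠ 0) :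
    HasFDerivAt (fun ξ' => lineInt q (⇑g) x ξ')
      (∫ t : ℝ, (t ^ q * t) • (fderiv ℝ g (x + t • ξ))) ξ := by
  have hξn : 0 < ‖ξ‖ := norm_pos_iff.mpr hξ
  obtain ⟨K, hK⟩ := dom_bound (SchwartzMap.fderivCLM ℝ (En n) ℝ g) (q + 1) (‖ξ‖ / 2) ‖x‖
    (by positivity) (norm_nonneg x)
  have hDcont : Continuous fun y : En n => fderiv ℝ g y := by
    rw [fderiv_eq_clm]; exact (SchwartzMap.fderivCLM ℝ (En n) ℝ g).continuous
  have hmeas : ∀ ξ' : En n, AEStronglyMeasurable (fun t : ℝ => t ^ q * g (x + t • ξ')) volume :=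
    fun ξ' => ((continuous_pow q).mul
      (g.continuous.comp (continuous_const.add (continuous_id.smul continuous_const)))).aestronglyMeasurable
  have hF'meas : AEStronglyMeasurable
      (fun t : ℝ => (t ^ q * t) • fderiv ℝ g (x + t • ξ)) volume := by
    apply Continuous.aestronglyMeasurable
    exact ((continuous_pow q).mul continuous_id).smul
      (hDcont.comp (continuous_const.add (continuous_id.smul continuous_const)))
  have hbound : ∀ᵐ t : ℝ, ∀ ξ' ∈ Metric.ball ξ (‖ξ‖ / 2),
      ‖(t ^ q * t) • fderiv ℝ g (x + t • ξ')‖ ≤ K * (1 + t ^ 2)⁻¹ := by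
    refine Filter.Eventually.of_forall fun t ξ' hξ' => ?_
    have hξ'n : ‖ξ‖ / 2 ≤ ‖ξ'‖ := by
      have h1 := mem_ball_iff_norm.mp hξ'
      have h2 := norm_sub_norm_le ξ ξ'
      rw [norm_sub_rev] at h2
      linarith
    have hin : ‖ξ‖ / 2 * |t| ≤ ‖x + t • ξ'‖ + ‖x‖ := by
      have h1 := norm_mul_abs_le x ξ' t
      have h2 : ‖ξ‖ / 2 * |t| ≤ ‖ξ'‖ * |t| :=
        mul_le_mul_of_nonneg_right hξ'n (abs_nonneg t)
      linarith
    have := hK t (x + t • ξ') hin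
    calc ‖(t ^ q * t) • fderiv ℝ g (x + t • ξ')‖
        = |t| ^ (q + 1) * ‖(SchwartzMap.fderivCLM ℝ (En n) ℝ g) (x + t • ξ')‖ := by
          rw [norm_smul, Real.norm_eq_abs, abs_mul, abs_pow, SchwartzMap.fderivCLM_apply,
            pow_succ]
      _ ≤ K * (1 + t ^ 2)⁻¹ := this
  have hdiff : ∀ᵐ t : ℝ, ∀ ξ' ∈ Metric.ball ξ (‖ξ‖ / 2),
      HasFDerivAt (fun ξ'' => t ^ q * g (x + t • ξ''))
        ((t ^ q * t) • fderiv ℝ g (x + t • ξ')) ξ' := by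
    refine Filter.Eventually.of_forall fun t ξ' _ => ?_
    have h1 : HasFDerivAt (fun ξ'' : En n => x + t • ξ'')
        (t • ContinuousLinearMap.id ℝ (En n)) ξ' :=
      ((hasFDerivAt_id ξ').const_smul t).const_add x
    have h2 : HasFDerivAt (⇑g) (fderiv ℝ g (x + t • ξ')) (x + t • ξ') :=
      g.differentiableAt.hasFDerivAt
    have h3 := h2.comp ξ' h1
    have hcomp : (fderiv ℝ g (x + t • ξ')).comp (t • ContinuousLinearMap.id ℝ (En n))
        = t • fderiv ℝ g (x + t • ξ') := by
      ext v; simp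
    rw [hcomp] at h3
    have h4 := h3.const_mul (t ^ q)
    rwa [smul_smul] at h4
  have := hasFDerivAt_integral_of_dominated_of_fderiv_le (𝕜 := ℝ) (μ := volume)
    (F := fun (ξ' : En n) (t : ℝ) => t ^ q * g (x + t • ξ'))
    (F' := fun (ξ' : En n) (t : ℝ) => (t ^ q * t) • fderiv ℝ g (x + t • ξ'))
    (x₀ := ξ) (bound := fun t => K * (1 + t ^ 2)⁻¹) (Metric.ball_mem_nhds ξ (by positivity))
    (Filter.Eventually.of_forall fun ξ' => hmeas ξ')
    (integrable_line_mul g q x ξ hξ)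
    hF'meas hbound (integrable_inv_one_add_sq.const_mul K) hdiff
  exact this

lemma lineInt_deriv_eval_xi (q : ℕ) (g : SchwartzMap (En n) ℝ) (x ξ : En n) (hξ : ξ ≠ 0)
    (j : Fin n) :
    (∫ t : ℝ, (t ^ q * t) • (fderiv ℝ g (x + t • ξ))) (EuclideanSpace.single j 1)
      = lineInt (q + 1) (⇑(Pd j g)) x ξ := by
  have hfun : (fun t : ℝ => (t ^ q * t) • fderiv ℝ g (x + t • ξ))
      = fun t : ℝ => t ^ (q + 1) • (SchwartzMap.fderivCLM ℝ (En n) ℝ g) (x + t • ξ) := by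
    funext t; rw [SchwartzMap.fderivCLM_apply, pow_succ]
  rw [hfun, ContinuousLinearMap.integral_apply (integrable_line _ (q + 1) x ξ hξ)]
  unfold lineInt
  exact integral_congr_ae (Filter.Eventually.of_forall fun t => by
    simp only [ContinuousLinearMap.smul_apply, SchwartzMap.fderivCLM_apply, Pd_apply, smul_eq_mul])

lemma Pd_comm (i j : Fin n) (g : SchwartzMap (En n) ℝ) (y : En n) :
    Pd i (Pd j g) y = Pd j (Pd i g) y := by
  have hg : ∀ z : En n, HasFDerivAt (⇑g) (fderiv ℝ g z) z := fun z =>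
    g.differentiableAt.hasFDerivAt
  have hdiff : DifferentiableAt ℝ (fun z : En n => fderiv ℝ g z) y := by
    rw [fderiv_eq_clm]; exact (SchwartzMap.fderivCLM ℝ (En n) ℝ g).differentiableAt
  have h2 : HasFDerivAt (fun z : En n => fderiv ℝ g z)
      (fderiv ℝ (fun z : En n => fderiv ℝ g z) y) y := hdiff.hasFDerivAt
  have hsym := second_derivative_symmetric hg h2 (EuclideanSpace.single i 1)
    (EuclideanSpace.single j 1)
  have hf : ∀ w : En n, fderiv ℝ (fun z : En n => (fderiv ℝ g z) w) y
      = (fderiv ℝ (fun z : En n => fderiv ℝ g z) y).flip w := by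
    intro w
    rw [fderiv_clm_apply hdiff (differentiableAt_const w)]
    simp
  have hPj : ⇑(Pd j g) = fun z : En n => (fderiv ℝ g z) (EuclideanSpace.single j 1) := by
    funext z; exact Pd_apply j g z
  have hPi : ⇑(Pd i g) = fun z : En n => (fderiv ℝ g z) (EuclideanSpace.single i 1) := by
    funext z; exact Pd_apply i g z
  rw [Pd_apply, Pd_apply, hPj, hPi, hf, hf, ContinuousLinearMap.flip_apply,
    ContinuousLinearMap.flip_apply]
  exact hsym

lemma lineInt_zero (q : ℕ) (x ξ : En n) :
    lineInt q (⇑(0 : SchwartzMap (En n) ℝ)) x ξ = 0 := by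
  simp [lineInt]

lemma lineInt_neg (q : ℕ) (f : SchwartzMap (En n) ℝ) (x ξ : En n) :
    lineInt q (⇑(-f)) x ξ = -lineInt q (⇑f) x ξ := by
  have hcoe : ⇑(-f) = fun y => -(f y) := rfl
  unfold lineInt
  rw [hcoe, ← integral_neg]
  exact integral_congr_ae (Filter.Eventually.of_forall fun t => by ring)

/-- The class of functions on `ℝⁿ × (ℝⁿ∖0)` which are finite sums of monomials in `ξ`
of degree at most `m` times line integrals of Schwartz functions. -/
def Good (m : ℕ) (F : En n → En n → ℝ) : Prop :=
  ∃ (ι : Type) (inst : Fintype ι) (S : ι → Finset ℕ) (c : ι → ℕ → Fin n)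
    (g : ι → SchwartzMap (En n) ℝ),
    (∀ k, (S k).card ≤ m) ∧
    ∀ x ξ : En n, ξ ≠ 0 →
      F x ξ = @Finset.sum ι ℝ _ (@Finset.univ ι inst)
        (fun k => (∏ s ∈ S k, ξ (c k s)) * lineInt 0 (⇑(g k)) x ξ)

lemma hasFDerivAt_mon (S : Finset ℕ) (c : ℕ → Fin n) (ξ : En n) :
    HasFDerivAt (fun ξ' : En n => ∏ s ∈ S, ξ' (c s))
      (∑ s ∈ S, (∏ s' ∈ S.erase s, ξ (c s')) •
        (EuclideanSpace.proj (c s) : En n →L[ℝ] ℝ)) ξ :=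
by
  refine HasFDerivAt.finset_prod fun s _ => ?_
  have h := (EuclideanSpace.proj (c s) : En n →L[ℝ] ℝ).hasFDerivAt (x := ξ)
  exact h.congr_of_eventuallyEq (Filter.Eventually.of_forall fun y =>
    (PiLp.proj_apply (𝕜 := ℝ) 2 (fun _ : Fin n => ℝ) (c s) y).symm)

lemma mon_deriv_eval (S : Finset ℕ) (c : ℕ → Fin n) (ξ : En n) (j : Fin n) :
    (∑ s ∈ S, (∏ s' ∈ S.erase s, ξ (c s')) •
        (EuclideanSpace.proj (c s) : En n →L[ℝ] ℝ)) (EuclideanSpace.single j 1)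
      = ∑ s ∈ S, (if c s = j then ∏ s' ∈ S.erase s, ξ (c s') else 0) := by
  rw [ContinuousLinearMap.sum_apply]
  refine Finset.sum_congr rfl fun s _ => ?_
  rw [ContinuousLinearMap.smul_apply]
  have hp : (EuclideanSpace.proj (c s) : En n →L[ℝ] ℝ) (EuclideanSpace.single j 1)
      = if c s = j then 1 else 0 := by
    rw [PiLp.proj_apply, EuclideanSpace.single_apply]
  rw [hp]
  split_ifs <;> simp [smul_eq_mul]

lemma pdxi_sum {ι : Type} [Fintype ι] (S : ι → Finset ℕ) (c : ι → ℕ → Fin n)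
    (g : ι → SchwartzMap (En n) ℝ) (j : Fin n) (x ξ : En n) (hξ : ξ ≠ 0) :
    pdxi j (fun x ξ => ∑ k, (∏ s ∈ S k, ξ (c k s)) * lineInt 0 (⇑(g k)) x ξ) x ξ
    = ∑ k, ((∑ s ∈ S k, if c k s = j then ∏ s' ∈ (S k).erase s, ξ (c k s') else 0)
              * lineInt 0 (⇑(g k)) x ξ
          + (∏ s ∈ S k, ξ (c k s)) * lineInt 1 (⇑(Pd j (g k))) x ξ) := by
  have hterm : ∀ k : ι, HasFDerivAt
      (fun ξ' : En n => (∏ s ∈ S k, ξ' (c k s)) * lineInt 0 (⇑(g k)) x ξ')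
      ((∏ s ∈ S k, ξ (c k s)) • (∫ t : ℝ, (t ^ 0 * t) • (fderiv ℝ (g k) (x + t • ξ)))
        + (lineInt 0 (⇑(g k)) x ξ) • (∑ s ∈ S k, (∏ s' ∈ (S k).erase s, ξ (c k s')) •
            (EuclideanSpace.proj (c k s) : En n →L[ℝ] ℝ))) ξ :=
    fun k => (hasFDerivAt_mon (S k) (c k) ξ).mul (hasFDerivAt_lineInt_xi 0 (g k) x ξ hξ)
  have hsum := HasFDerivAt.fun_sum (fun k (_ : k ∈ Finset.univ) => hterm k)
  unfold pdxi
  rw [hsum.fderiv, ContinuousLinearMap.sum_apply]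
  refine Finset.sum_congr rfl fun k _ => ?_
  rw [ContinuousLinearMap.add_apply, ContinuousLinearMap.smul_apply,
    ContinuousLinearMap.smul_apply, lineInt_deriv_eval_xi 0 (g k) x ξ hξ j,
    mon_deriv_eval (S k) (c k) ξ j, smul_eq_mul, smul_eq_mul]
  ring

lemma pdx_sum {ι : Type} [Fintype ι] (a b : ι → ℝ) (q1 q2 : ℕ)
    (g1 g2 : ι → SchwartzMap (En n) ℝ) (i : Fin n) (x ξ : En n) (hξ : ξ ≠ 0) :
    pdx i (fun x _ => ∑ k, (a k * lineInt q1 (⇑(g1 k)) x ξ + b k * lineInt q2 (⇑(g2 k)) x ξ)) x ξ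
    = ∑ k, (a k * lineInt q1 (⇑(Pd i (g1 k))) x ξ + b k * lineInt q2 (⇑(Pd i (g2 k))) x ξ) := by
  have hterm : ∀ k : ι, HasFDerivAt
      (fun x' : En n => a k * lineInt q1 (⇑(g1 k)) x' ξ + b k * lineInt q2 (⇑(g2 k)) x' ξ)
      (a k • (∫ t : ℝ, t ^ q1 • (fderiv ℝ (g1 k) (x + t • ξ)))
        + b k • (∫ t : ℝ, t ^ q2 • (fderiv ℝ (g2 k) (x + t • ξ)))) x :=
    fun k => ((hasFDerivAt_lineInt_x q1 (g1 k) x ξ hξ).const_mul (a k)).add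
      ((hasFDerivAt_lineInt_x q2 (g2 k) x ξ hξ).const_mul (b k))
  have hsum := HasFDerivAt.fun_sum (fun k (_ : k ∈ Finset.univ) => hterm k)
  unfold pdx
  rw [hsum.fderiv, ContinuousLinearMap.sum_apply]
  refine Finset.sum_congr rfl fun k _ => ?_
  rw [ContinuousLinearMap.add_apply, ContinuousLinearMap.smul_apply,
    ContinuousLinearMap.smul_apply, lineInt_deriv_eval q1 (g1 k) x ξ hξ i,
    lineInt_deriv_eval q2 (g2 k) x ξ hξ i, smul_eq_mul, smul_eq_mul]

lemma pdxi_congr {F G : En n → En n → ℝ} (hFG : ∀ x ξ : En n, ξ ≠ 0 → F x ξ = G x ξ)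
    (j : Fin n) (x ξ : En n) (hξ : ξ ≠ 0) : pdxi j F x ξ = pdxi j G x ξ := by
  unfold pdxi
  congr 1
  apply Filter.EventuallyEq.fderiv_eq
  have hmem : {ξ' : En n | ξ' ≠ 0} ∈ nhds ξ := (isOpen_ne).mem_nhds hξ
  exact Filter.eventually_of_mem hmem fun ξ' hξ' => hFG x ξ' hξ'

lemma pdx_congr {u v : En n → En n → ℝ} (ξ : En n) (huv : ∀ x', u x' ξ = v x' ξ)
    (i : Fin n) (x : En n) : pdx i u x ξ = pdx i v x ξ := by
  unfold pdx
  have h : (fun x' => u x' ξ) = fun x' => v x' ξ := funext huv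
  rw [h]

lemma johnOp_formula {F : En n → En n → ℝ} (i j : Fin n)
    (ι : Type) (inst : Fintype ι) (S : ι → Finset ℕ) (c : ι → ℕ → Fin n)
    (g : ι → SchwartzMap (En n) ℝ)
    (hrep : ∀ x ξ : En n, ξ ≠ 0 → F x ξ =
      ∑ k, (∏ s ∈ S k, ξ (c k s)) * lineInt 0 (⇑(g k)) x ξ) :
    ∀ x ξ : En n, ξ ≠ 0 → johnOp i j F x ξ =
      ∑ k, ((∑ s ∈ S k, if c k s = j then ∏ s' ∈ (S k).erase s, ξ (c k s') else 0)
              * lineInt 0 (⇑(Pd i (g k))) x ξ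
          - (∑ s ∈ S k, if c k s = i then ∏ s' ∈ (S k).erase s, ξ (c k s') else 0)
              * lineInt 0 (⇑(Pd j (g k))) x ξ) := by
  intro x ξ hξ
  have step1 : ∀ (jj : Fin n) (x' : En n),
      pdxi jj F x' ξ = ∑ k,
        ((∑ s ∈ S k, if c k s = jj then ∏ s' ∈ (S k).erase s, ξ (c k s') else 0)
            * lineInt 0 (⇑(g k)) x' ξ
          + (∏ s ∈ S k, ξ (c k s)) * lineInt 1 (⇑(Pd jj (g k))) x' ξ) := by
    intro jj x'
    rw [pdxi_congr hrep jj x' ξ hξ]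
    exact pdxi_sum S c g jj x' ξ hξ
  have step2 : ∀ (ii jj : Fin n), pdx ii (pdxi jj F) x ξ = ∑ k,
      ((∑ s ∈ S k, if c k s = jj then ∏ s' ∈ (S k).erase s, ξ (c k s') else 0)
          * lineInt 0 (⇑(Pd ii (g k))) x ξ
        + (∏ s ∈ S k, ξ (c k s)) * lineInt 1 (⇑(Pd ii (Pd jj (g k)))) x ξ) := by
    intro ii jj
    rw [pdx_congr (v := fun x' _ => ∑ k,
      ((∑ s ∈ S k, if c k s = jj then ∏ s' ∈ (S k).erase s, ξ (c k s') else 0)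
          * lineInt 0 (⇑(g k)) x' ξ
        + (∏ s ∈ S k, ξ (c k s)) * lineInt 1 (⇑(Pd jj (g k))) x' ξ)) ξ (step1 jj) ii x]
    exact pdx_sum (fun k => ∑ s ∈ S k, if c k s = jj then ∏ s' ∈ (S k).erase s, ξ (c k s') else 0)
      (fun k => ∏ s ∈ S k, ξ (c k s)) 0 1 g (fun k => Pd jj (g k)) ii x ξ hξ
  show pdx i (pdxi j F) x ξ - pdx j (pdxi i F) x ξ = _
  rw [step2 i j, step2 j i, ← Finset.sum_sub_distrib]
  refine Finset.sum_congr rfl fun k _ => ?_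
  have hcomm : ⇑(Pd i (Pd j (g k))) = ⇑(Pd j (Pd i (g k))) := funext (Pd_comm i j (g k))
  rw [hcomm]
  ring

lemma good_johnOp {m : ℕ} {F : En n → En n → ℝ} (i j : Fin n) (hF : Good (m + 1) F) :
    Good m (johnOp i j F) := by
  obtain ⟨ι, inst, S, c, g, hcard, hrep⟩ := hF
  letI := inst
  have hfor := johnOp_formula i j ι inst S c g hrep
  refine ⟨(Σ k : ι, {s // s ∈ S k}) × Bool, inferInstance,
    (fun p => (S p.1.1).erase p.1.2.val),
    (fun p => c p.1.1),
    (fun p => cond p.2 (if c p.1.1 p.1.2.val = j then Pd i (g p.1.1) else 0)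
              (if c p.1.1 p.1.2.val = i then -(Pd j (g p.1.1)) else 0)),
    ?_, ?_⟩
  · rintro ⟨⟨k, s⟩, b⟩
    have h1 := hcard k
    have hs := Finset.card_erase_of_mem s.prop
    simp only at hs ⊢
    omega
  · intro x ξ hξ
    rw [hfor x ξ hξ, Fintype.sum_prod_type]
    rw [← Finset.univ_sigma_univ, Finset.sum_sigma]
    refine Finset.sum_congr rfl fun k _ => ?_
    rw [Finset.sum_coe_sort (S k)
      (fun s => ∑ b : Bool, (∏ s' ∈ (S k).erase s, ξ (c k s')) * lineInt 0
        (⇑(cond b (if c k s = j then Pd i (g k) else 0)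
           (if c k s = i then -(Pd j (g k)) else 0))) x ξ)]
    rw [Finset.sum_mul, Finset.sum_mul, ← Finset.sum_sub_distrib]
    refine Finset.sum_congr rfl fun s hs => ?_
    rw [Fintype.sum_bool]
    simp only [Bool.cond_true, Bool.cond_false]
    split_ifs <;> (try simp only [lineInt_zero, lineInt_neg]) <;> ring

lemma good_johnOp_zero {F : En n → En n → ℝ} (i j : Fin n) (hF : Good 0 F) :
    ∀ x ξ : En n, ξ ≠ 0 → johnOp i j F x ξ = 0 := by
  obtain ⟨ι, inst, S, c, g, hcard, hrep⟩ := hF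
  letI := inst
  intro x ξ hξ
  rw [johnOp_formula i j ι inst S c g hrep x ξ hξ]
  have hS : ∀ k, S k = ∅ := fun k => Finset.card_eq_zero.mp (Nat.le_zero.mp (hcard k))
  refine Finset.sum_eq_zero fun k _ => ?_
  rw [hS k]
  simp

lemma good_johnIter (l : List (Fin n × Fin n)) {m : ℕ} {F : En n → En n → ℝ}
    (hF : Good (l.length + m) F) : Good m (johnIter l F) := by
  induction l generalizing m with
  | nil => simpa [johnIter] using hF
  | cons p l' ih =>
    have h' : Good (l'.length + (m + 1)) F := by
      have h2 : l'.length + (m + 1) = (p :: l').length + m := by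
        simp [List.length_cons]; omega
      rwa [h2]
    exact good_johnOp p.1 p.2 (ih h')

lemma good_momRT (hn : 0 < n) {r : ℕ} (h : (Fin r → Fin n) → En n → ℝ)
    (hh : IsSchwartzField h) : Good r (momRT 0 h) := by
  choose φ hφ using hh
  refine ⟨(Fin r → Fin n), inferInstance, fun _ => Finset.range r,
    fun k s => if hs : s < r then k ⟨s, hs⟩ else ⟨0, hn⟩, φ, fun _ => by simp, ?_⟩
  intro x ξ hξ
  unfold momRT lineInt
  have hrw : ∀ t : ℝ,
      t ^ 0 * ∑ i : Fin r → Fin n, h i (x + t • ξ) * ∏ r', ξ (i r')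
      = ∑ i : Fin r → Fin n, (∏ r', ξ (i r')) * (t ^ 0 * φ i (x + t • ξ)) := by
    intro t
    rw [Finset.mul_sum]
    refine Finset.sum_congr rfl fun i _ => ?_
    rw [← hφ i]
    ring
  simp_rw [hrw]
  rw [integral_finset_sum _ (fun i _ => ((integrable_line_mul (φ i) 0 x ξ hξ).const_mul _))]
  refine Finset.sum_congr rfl fun i _ => ?_
  rw [MeasureTheory.integral_const_mul]
  congr 1
  rw [← Fin.prod_univ_eq_prod_range (fun s => ξ (if hs : s < r then i ⟨s, hs⟩ else ⟨0, hn⟩)) r]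
  refine Finset.prod_congr rfl fun jj _ => ?_
  rw [dif_pos jj.isLt]

end JohnProof

/-- the `(r+1)`-fold iterated John operators annihilate the ray
transform `J^0 h` of any Schwartz symmetric `r`-tensor field `h`. -/
theorem john_operators_annihilate_ray_transform
    (n r : ℕ)
    (h : (Fin r → Fin n) → En n → ℝ)
    (hh : IsSchwartzField h) (hhsym : IsSymField h)
    (idx jdx : Fin (r + 1) → Fin n) :
    ∀ x ξ : En n, ξ ≠ 0 →
      johnIter ((List.finRange (r + 1)).map (fun s => (idx s, jdx s)))
        (momRT 0 h) x ξ = 0 := by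
  intro x ξ hξ
  rcases Nat.eq_zero_or_pos n with hn | hn
  · exfalso
    apply hξ
    subst hn
    ext i
    exact absurd i.isLt (by omega)
  set L := (List.finRange (r + 1)).map (fun s => (idx s, jdx s)) with hL
  have hlen : L.length = r + 1 := by simp [hL]
  obtain ⟨p, l', hcons⟩ : ∃ p l', L = p :: l' := by
    cases hLc : L with
    | nil => rw [hLc] at hlen; simp at hlen
    | cons a b => exact ⟨a, b, rfl⟩
  have hl' : l'.length = r := by
    rw [hcons] at hlen
    simpa using hlen
  have hgood : JohnProof.Good 0 (johnIter l' (momRT 0 h)) := by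
    apply JohnProof.good_johnIter
    rw [hl', Nat.add_zero]
    exact JohnProof.good_momRT hn h hh
  rw [hcons]
  exact JohnProof.good_johnOp_zero p.1 p.2 hgood x ξ hξ
end
end
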